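/- arXiv:2407.15579 — 5 statements merged into one kernel-verified Lean document; each statement's English description precedes it below -/
import Mathlib

section
/- Let V, W be Orlicz functions, and let (α,β₁), (α,β₂) be in the domain D_φ = {(α,β) : ∫_ℝ e^{αV+βW} dx < ∞} with β₁ < β₂. Then the expectation of V under the Gibbs measure μ_{α,β} (with density e^{αV(x)+βW(x)}/Z_{α,β}) is strictly larger for β₂ than for β₁: E_{μ_{α,β₁}}[V(X)] < E_{μ_{α,β₂}}[V(X)]. -/
open MeasureTheory Filter Real

private lemma orlicz_lt {V : ℝ → ℝ}
    (hconv : ConvexOn ℝ Set.univ V)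
    (hnonneg : ∀ x, 0 ≤ V x) (hzero : ∀ x, V x = 0 ↔ x = 0)
    {a b : ℝ} (ha : 0 ≤ a) (hab : a < b) : V a < V b := by
  have hb : 0 < b := lt_of_le_of_lt ha hab
  have hVb : 0 < V b := by
    rcases lt_or_eq_of_le (hnonneg b) with h | h
    · exact h
    · exact absurd ((hzero b).mp h.symm) (ne_of_gt hb)
  rcases eq_or_lt_of_le ha with h | h
  · rw [← h, (hzero 0).mpr rfl]; exact hVb
  · have ht1 : 0 ≤ 1 - a / b := by
      have : a / b < 1 := (div_lt_one hb).mpr hab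
      linarith
    have ht2 : 0 ≤ a / b := by positivity
    have key := hconv.2 (Set.mem_univ 0) (Set.mem_univ b) ht1 ht2 (by field_simp; ring)
    have hsum : (1 - a / b) • (0:ℝ) + (a / b) • b = a := by
      simp only [smul_eq_mul]
      field_simp
      ring
    rw [hsum] at key
    have h0 : V 0 = 0 := (hzero 0).mpr rfl
    rw [smul_eq_mul, smul_eq_mul, h0, mul_zero, zero_add] at key
    have hlt : (a / b) * V b < V b := by
      have : a / b < 1 := (div_lt_one hb).mpr hab
      nlinarith
    linarith

private lemma orlicz_abs {V : ℝ → ℝ} (hsym : ∀ x, V (-x) = V x) (x : ℝ) :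
    V |x| = V x := by
  rcases abs_cases x with ⟨h, _⟩ | ⟨h, _⟩
  · rw [h]
  · rw [h, hsym]

theorem gibbs_expectation_strictMono_in_beta
    (V W : ℝ → ℝ)
    (hVsym : ∀ x, V (-x) = V x) (hVconv : ConvexOn ℝ Set.univ V)
    (hVnonneg : ∀ x, 0 ≤ V x) (hVzero : ∀ x, V x = 0 ↔ x = 0)
    (hWsym : ∀ x, W (-x) = W x) (hWconv : ConvexOn ℝ Set.univ W)
    (hWnonneg : ∀ x, 0 ≤ W x) (hWzero : ∀ x, W x = 0 ↔ x = 0)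
    (α β₁ β₂ : ℝ) (hββ : β₁ < β₂)
    (hZ₁ : Integrable (fun x => Real.exp (α * V x + β₁ * W x)))
    (hZ₂ : Integrable (fun x => Real.exp (α * V x + β₂ * W x)))
    (hE₁ : Integrable (fun x => V x * Real.exp (α * V x + β₁ * W x)))
    (hE₂ : Integrable (fun x => V x * Real.exp (α * V x + β₂ * W x))) :
    (∫ x, V x * Real.exp (α * V x + β₁ * W x)) /
      (∫ x, Real.exp (α * V x + β₁ * W x)) <
    (∫ x, V x * Real.exp (α * V x + β₂ * W x)) /
      (∫ x, Real.exp (α * V x + β₂ * W x)) := by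
  set ρ₁ : ℝ → ℝ := fun x => Real.exp (α * V x + β₁ * W x) with hρ₁
  set ρ₂ : ℝ → ℝ := fun x => Real.exp (α * V x + β₂ * W x) with hρ₂
  set Z₁ := ∫ x, ρ₁ x with hZ₁def
  set Z₂ := ∫ x, ρ₂ x with hZ₂def
  set I₁ := ∫ x, V x * ρ₁ x with hI₁def
  set I₂ := ∫ x, V x * ρ₂ x with hI₂def
  have hZ₁pos : 0 < Z₁ := integral_exp_pos hZ₁
  have hZ₂pos : 0 < Z₂ := integral_exp_pos hZ₂
  -- key strict monotonicity fact
  have hVmono : ∀ x y : ℝ, |y| < |x| → V y < V x := by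
    intro x y h
    rw [← orlicz_abs hVsym x, ← orlicz_abs hVsym y]
    exact orlicz_lt hVconv hVnonneg hVzero (abs_nonneg y) h
  have hWmono : ∀ x y : ℝ, |y| < |x| → W y < W x := by
    intro x y h
    rw [← orlicz_abs hWsym x, ← orlicz_abs hWsym y]
    exact orlicz_lt hWconv hWnonneg hWzero (abs_nonneg y) h
  have hVle : ∀ x y : ℝ, |y| ≤ |x| → V y ≤ V x := by
    intro x y h
    rcases eq_or_lt_of_le h with h | h
    · rw [← orlicz_abs hVsym x, ← orlicz_abs hVsym y, h]
    · exact (hVmono x y h).le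
  have hWle : ∀ x y : ℝ, |y| ≤ |x| → W y ≤ W x := by
    intro x y h
    rcases eq_or_lt_of_le h with h | h
    · rw [← orlicz_abs hWsym x, ← orlicz_abs hWsym y, h]
    · exact (hWmono x y h).le
  -- the correlation kernel
  set H : ℝ × ℝ → ℝ := fun p =>
    (V p.1 * ρ₂ p.1) * ρ₁ p.2 - (V p.1 * ρ₁ p.1) * ρ₂ p.2
      - ρ₂ p.1 * (V p.2 * ρ₁ p.2) + ρ₁ p.1 * (V p.2 * ρ₂ p.2) with hHdef
  have hfact : ∀ p : ℝ × ℝ, H p =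
      (V p.1 - V p.2) * (Real.exp ((β₂ - β₁) * W p.1) - Real.exp ((β₂ - β₁) * W p.2))
        * (ρ₁ p.1 * ρ₁ p.2) := by
    intro p
    have e1 : ρ₂ p.1 = Real.exp ((β₂ - β₁) * W p.1) * ρ₁ p.1 := by
      simp only [hρ₁, hρ₂, ← Real.exp_add]; ring_nf
    have e2 : ρ₂ p.2 = Real.exp ((β₂ - β₁) * W p.2) * ρ₁ p.2 := by
      simp only [hρ₁, hρ₂, ← Real.exp_add]; ring_nf
    simp only [hHdef, e1, e2]; ring
  have hHnonneg : ∀ p : ℝ × ℝ, 0 ≤ H p := by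
    intro p
    rw [hfact p]
    rcases le_total |p.2| |p.1| with h | h
    · have h1 : 0 ≤ V p.1 - V p.2 := by linarith [hVle p.1 p.2 h]
      have h2 : 0 ≤ Real.exp ((β₂ - β₁) * W p.1) - Real.exp ((β₂ - β₁) * W p.2) := by
        have := hWle p.1 p.2 h
        have : (β₂ - β₁) * W p.2 ≤ (β₂ - β₁) * W p.1 :=
          mul_le_mul_of_nonneg_left this (by linarith)
        linarith [Real.exp_le_exp.mpr this]
      positivity
    · have h1 : V p.1 - V p.2 ≤ 0 := by linarith [hVle p.2 p.1 h]
      have h2 : Real.exp ((β₂ - β₁) * W p.1) - Real.exp ((β₂ - β₁) * W p.2) ≤ 0 := by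
        have := hWle p.2 p.1 h
        have : (β₂ - β₁) * W p.1 ≤ (β₂ - β₁) * W p.2 :=
          mul_le_mul_of_nonneg_left this (by linarith)
        linarith [Real.exp_le_exp.mpr this]
      have h3 : 0 < ρ₁ p.1 * ρ₁ p.2 := by
        simp only [hρ₁]; positivity
      have h4 : 0 ≤ (V p.1 - V p.2) *
          (Real.exp ((β₂ - β₁) * W p.1) - Real.exp ((β₂ - β₁) * W p.2)) := by nlinarith
      exact mul_nonneg h4 h3.le
  have hint1 : Integrable (fun z : ℝ × ℝ => (V z.1 * ρ₂ z.1) * ρ₁ z.2) (volume.prod volume) :=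
    hE₂.mul_prod hZ₁
  have hint2 : Integrable (fun z : ℝ × ℝ => (V z.1 * ρ₁ z.1) * ρ₂ z.2) (volume.prod volume) :=
    hE₁.mul_prod hZ₂
  have hint3 : Integrable (fun z : ℝ × ℝ => ρ₂ z.1 * (V z.2 * ρ₁ z.2)) (volume.prod volume) :=
    hZ₂.mul_prod hE₁
  have hint4 : Integrable (fun z : ℝ × ℝ => ρ₁ z.1 * (V z.2 * ρ₂ z.2)) (volume.prod volume) :=
    hZ₁.mul_prod hE₂
  have hint12 : Integrable (fun z : ℝ × ℝ =>
      (V z.1 * ρ₂ z.1) * ρ₁ z.2 - (V z.1 * ρ₁ z.1) * ρ₂ z.2) (volume.prod volume) :=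
    hint1.sub hint2
  have hint123 : Integrable (fun z : ℝ × ℝ =>
      (V z.1 * ρ₂ z.1) * ρ₁ z.2 - (V z.1 * ρ₁ z.1) * ρ₂ z.2 - ρ₂ z.1 * (V z.2 * ρ₁ z.2))
      (volume.prod volume) := hint12.sub hint3
  have hHint : Integrable H (volume.prod volume) := hint123.add hint4
  have e1 : (∫ z : ℝ × ℝ, (V z.1 * ρ₂ z.1) * ρ₁ z.2 ∂(volume.prod volume)) = I₂ * Z₁ :=
    integral_prod_mul (fun x => V x * ρ₂ x) ρ₁
  have e2 : (∫ z : ℝ × ℝ, (V z.1 * ρ₁ z.1) * ρ₂ z.2 ∂(volume.prod volume)) = I₁ * Z₂ :=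
    integral_prod_mul (fun x => V x * ρ₁ x) ρ₂
  have e3 : (∫ z : ℝ × ℝ, ρ₂ z.1 * (V z.2 * ρ₁ z.2) ∂(volume.prod volume)) = Z₂ * I₁ :=
    integral_prod_mul ρ₂ (fun x => V x * ρ₁ x)
  have e4 : (∫ z : ℝ × ℝ, ρ₁ z.1 * (V z.2 * ρ₂ z.2) ∂(volume.prod volume)) = Z₁ * I₂ :=
    integral_prod_mul ρ₁ (fun x => V x * ρ₂ x)
  have hHval : ∫ p, H p ∂(volume.prod volume) = I₂ * Z₁ - I₁ * Z₂ - Z₂ * I₁ + Z₁ * I₂ := by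
    have step : ∫ p, H p ∂(volume.prod volume) =
        (∫ z : ℝ × ℝ, (V z.1 * ρ₂ z.1) * ρ₁ z.2 ∂(volume.prod volume))
        - (∫ z : ℝ × ℝ, (V z.1 * ρ₁ z.1) * ρ₂ z.2 ∂(volume.prod volume))
        - (∫ z : ℝ × ℝ, ρ₂ z.1 * (V z.2 * ρ₁ z.2) ∂(volume.prod volume))
        + (∫ z : ℝ × ℝ, ρ₁ z.1 * (V z.2 * ρ₂ z.2) ∂(volume.prod volume)) := by
      rw [hHdef, integral_add hint123 hint4, integral_sub hint12 hint3,
        integral_sub hint1 hint2]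
    rw [step, e1, e2, e3, e4]
  have hHpos : 0 < ∫ p, H p ∂(volume.prod volume) := by
    rw [integral_pos_iff_support_of_nonneg hHnonneg hHint]
    have hsub : (Set.Ioo (1:ℝ) 2) ×ˢ (Set.Ioo (0:ℝ) 1) ⊆ Function.support H := by
      rintro ⟨x, y⟩ ⟨⟨hx1, hx2⟩, hy1, hy2⟩
      have habs : |y| < |x| := by
        rw [abs_of_pos hy1, abs_of_pos (by linarith : (0:ℝ) < x)]; linarith
      have h1 : 0 < V x - V y := by linarith [hVmono x y habs]
      have h2 : 0 < Real.exp ((β₂ - β₁) * W x) - Real.exp ((β₂ - β₁) * W y) := by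
        have hw := hWmono x y habs
        have : (β₂ - β₁) * W y < (β₂ - β₁) * W x :=
          mul_lt_mul_of_pos_left hw (by linarith)
        linarith [Real.exp_lt_exp.mpr this]
      have h3 : 0 < ρ₁ x * ρ₁ y := by simp only [hρ₁]; positivity
      have : 0 < H (x, y) := by rw [hfact (x, y)]; positivity
      exact ne_of_gt this
    have hmeas : (volume.prod volume) ((Set.Ioo (1:ℝ) 2) ×ˢ (Set.Ioo (0:ℝ) 1)) = 1 := by
      rw [Measure.prod_prod]
      simp [Real.volume_Ioo]
      norm_num
    calc (0:ENNReal) < 1 := by norm_num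
      _ = (volume.prod volume) ((Set.Ioo (1:ℝ) 2) ×ˢ (Set.Ioo (0:ℝ) 1)) := hmeas.symm
      _ ≤ (volume.prod volume) (Function.support H) := measure_mono hsub
  rw [hHval] at hHpos
  rw [div_lt_div_iff₀ hZ₁pos hZ₂pos]
  linarith
end

section
/- Let V, W : ℝ → [0,∞) be two Orlicz functions which are twice continuously differentiable except at countably many points with no accumulation points. For λ ∈ [−1,1], let M_λ ⊆ ℝ be the set of points where x ↦ V(x) + λW(x) changes its curvature (inflection points). Then the closure of M_λ cannot contain a nontrivial interval. -/
open MeasureTheory Filter Real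

theorem inflection_points_closure_no_interval
    (V W : ℝ → ℝ)
    (hVsym : ∀ x, V (-x) = V x) (hVconv : ConvexOn ℝ Set.univ V)
    (hVnonneg : ∀ x, 0 ≤ V x) (hVzero : ∀ x, V x = 0 ↔ x = 0)
    (hWsym : ∀ x, W (-x) = W x) (hWconv : ConvexOn ℝ Set.univ W)
    (hWnonneg : ∀ x, 0 ≤ W x) (hWzero : ∀ x, W x = 0 ↔ x = 0)
    (S : Set ℝ) (hScount : S.Countable)
    (hSacc : ∀ x : ℝ, ¬ AccPt x (Filter.principal S))
    (hVC2 : ContDiffOn ℝ 2 V Sᶜ) (hWC2 : ContDiffOn ℝ 2 W Sᶜ) :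
    ∀ lam ∈ Set.Icc (-1 : ℝ) 1,
      ∀ a b : ℝ, a < b →
        ¬ (Set.Ioo a b ⊆ closure {x : ℝ | ∀ δ > (0 : ℝ),
            ¬ ConvexOn ℝ (Set.Ioo (x - δ) (x + δ)) (fun y => V y + lam * W y) ∧
            ¬ ConcaveOn ℝ (Set.Ioo (x - δ) (x + δ)) (fun y => V y + lam * W y)}) := by
  intro lam _ a b hab hsub
  set f : ℝ → ℝ := fun y => V y + lam * W y with hfdef
  set M : Set ℝ := {x : ℝ | ∀ δ > (0 : ℝ),
      ¬ ConvexOn ℝ (Set.Ioo (x - δ) (x + δ)) f ∧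
      ¬ ConcaveOn ℝ (Set.Ioo (x - δ) (x + δ)) f} with hMdef
  -- S is closed
  have hSclosed : IsClosed S := by
    rw [← isOpen_compl_iff, isOpen_iff_mem_nhds]
    intro x hx
    by_contra h
    apply hSacc x
    rw [accPt_principal_iff_clusterPt]
    have hSd : S \ {x} = S := by
      ext y; simp only [Set.mem_diff, Set.mem_singleton_iff]
      exact ⟨fun h => h.1, fun hy => ⟨hy, fun e => hx (e ▸ hy)⟩⟩
    rw [hSd, clusterPt_principal_iff]
    intro U hU
    by_contra h2
    push_neg at h2
    exact h (mem_of_superset hU (by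
      intro y hy; by_contra hc; simp only [Set.mem_compl_iff, not_not] at hc
      exact absurd (Set.mem_inter hy hc) (h2 ▸ Set.notMem_empty y)))
  -- f is C² on Sᶜ
  have hfC2 : ContDiffOn ℝ 2 f Sᶜ := hVC2.add (hWC2.const_smul lam)
  -- find an open interval inside Sᶜ ∩ Ioo a b
  have hdense : Dense Sᶜ := hScount.dense_compl ℝ
  obtain ⟨x₀, hx₀S, hx₀ab⟩ : ∃ x₀, x₀ ∈ Sᶜ ∧ x₀ ∈ Set.Ioo a b := by
    obtain ⟨x₀, h1, h2⟩ := hdense.exists_mem_open isOpen_Ioo (Set.nonempty_Ioo.2 hab)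
    exact ⟨x₀, h1, h2⟩
  have hopen : IsOpen (Sᶜ ∩ Set.Ioo a b) := hSclosed.isOpen_compl.inter isOpen_Ioo
  obtain ⟨ε, hε, hball⟩ := Metric.isOpen_iff.1 hopen x₀ ⟨hx₀S, hx₀ab⟩
  rw [Real.ball_eq_Ioo] at hball
  set U : Set ℝ := Set.Ioo (x₀ - ε) (x₀ + ε) with hUdef
  have hUopen : IsOpen U := isOpen_Ioo
  have hUS : U ⊆ Sᶜ := hball.trans (Set.inter_subset_left)
  have hUab : U ⊆ Set.Ioo a b := hball.trans (Set.inter_subset_right)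
  have hx₀U : x₀ ∈ U := by constructor <;> simp [hε] <;> linarith
  -- derivative facts on U
  have hfC2U : ContDiffOn ℝ 2 f U := hfC2.mono hUS
  have hders : DifferentiableOn ℝ f U ∧ DifferentiableOn ℝ (deriv f) U ∧
      ContinuousOn (deriv (deriv f)) U := by
    have h2 : ContDiffOn ℝ ((1 : ℕ) + 1) f U := by norm_num; exact hfC2U
    rw [contDiffOn_succ_iff_deriv_of_isOpen hUopen] at h2
    obtain ⟨hd1, -, h1⟩ := h2
    have h1' : ContDiffOn ℝ ((0 : ℕ) + 1) (deriv f) U := by norm_num; exact h1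
    rw [contDiffOn_succ_iff_deriv_of_isOpen hUopen] at h1'
    obtain ⟨hd2, -, h0⟩ := h1'
    exact ⟨hd1, hd2, h0.continuousOn⟩
  obtain ⟨hd1, hd2, hcont⟩ := hders
  set g : ℝ → ℝ := deriv (deriv f) with hgdef
  -- density of M ∩ U in U
  have hdenseMU : ∀ x ∈ U, x ∈ closure (M ∩ U) := by
    intro x hxU
    rw [mem_closure_iff_nhds]
    intro t ht
    have hx : x ∈ closure M := hsub (hUab hxU)
    rw [mem_closure_iff_nhds] at hx
    obtain ⟨y, hyt, hyM⟩ := hx (t ∩ U) (Filter.inter_mem ht (hUopen.mem_nhds hxU))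
    exact ⟨y, hyt.1, hyM, hyt.2⟩
  -- g vanishes on M ∩ U
  have hgzero : ∀ x ∈ M ∩ U, g x = 0 := by
    rintro x ⟨hxM, hxU⟩
    by_contra hne
    have hcx : ContinuousAt g x := hcont.continuousAt (hUopen.mem_nhds hxU)
    have hUnhds : U ∈ nhds x := hUopen.mem_nhds hxU
    rcases lt_or_gt_of_ne hne with hneg | hpos
    · have hev : {y | g y < 0} ∈ nhds x := hcx.eventually_lt continuousAt_const hneg
      obtain ⟨δ, hδ, hδball⟩ := Metric.mem_nhds_iff.1 (Filter.inter_mem hev hUnhds)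
      rw [Real.ball_eq_Ioo] at hδball
      have hsubU : Set.Ioo (x - δ) (x + δ) ⊆ U := fun y hy => (hδball hy).2
      have hcc : ConcaveOn ℝ (Set.Ioo (x - δ) (x + δ)) f := by
        apply concaveOn_of_deriv2_nonpos' (convex_Ioo _ _) (hd1.mono hsubU) (hd2.mono hsubU)
        intro y hy
        have hlt : g y < 0 := (hδball hy).1
        simpa [hgdef] using le_of_lt hlt
      exact (hxM δ hδ).2 hcc
    · have hev : {y | 0 < g y} ∈ nhds x := continuousAt_const.eventually_lt hcx hpos
      obtain ⟨δ, hδ, hδball⟩ := Metric.mem_nhds_iff.1 (Filter.inter_mem hev hUnhds)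
      rw [Real.ball_eq_Ioo] at hδball
      have hsubU : Set.Ioo (x - δ) (x + δ) ⊆ U := fun y hy => (hδball hy).2
      have hcc : ConvexOn ℝ (Set.Ioo (x - δ) (x + δ)) f := by
        apply convexOn_of_deriv2_nonneg' (convex_Ioo _ _) (hd1.mono hsubU) (hd2.mono hsubU)
        intro y hy
        have hlt : 0 < g y := (hδball hy).1
        simpa [hgdef] using le_of_lt hlt
      exact (hxM δ hδ).1 hcc
  -- hence g vanishes on all of U by continuity and density
  have hgzeroU : ∀ x ∈ U, g x = 0 := by
    intro x hxU
    have hcx : ContinuousWithinAt g (M ∩ U) x :=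
      (hcont.continuousAt (hUopen.mem_nhds hxU)).continuousWithinAt
    have himg : g x ∈ closure (g '' (M ∩ U)) :=
      hcx.mem_closure_image (hdenseMU x hxU)
    have hsub0 : g '' (M ∩ U) ⊆ {0} := by
      rintro y ⟨z, hz, rfl⟩; exact hgzero z hz
    have := closure_mono hsub0 himg
    simpa using this
  -- so f is convex on U
  have hconvU : ConvexOn ℝ U f := by
    apply convexOn_of_deriv2_nonneg' (convex_Ioo _ _) hd1 hd2
    intro y hy
    simp only [Function.iterate_succ, Function.iterate_zero, Function.comp_apply, id]
    rw [show deriv (deriv f) y = g y from rfl, hgzeroU y hy]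
  -- but M ∩ U is nonempty, contradiction
  obtain ⟨x, hxM, hxU⟩ : (M ∩ U).Nonempty := by
    by_contra hempty
    rw [Set.not_nonempty_iff_eq_empty] at hempty
    have := hdenseMU x₀ hx₀U
    rw [hempty] at this
    simpa using this
  obtain ⟨δ, hδ, hδball⟩ := Metric.mem_nhds_iff.1 (hUopen.mem_nhds hxU)
  rw [Real.ball_eq_Ioo] at hδball
  exact (hxM δ hδ).1 (hconvU.subset hδball (convex_Ioo _ _))
end

section
/- Let Σ be a 2×2 positive definite symmetric real matrix with inverse (ρ_{ij}), and let α < 0, β > 0. Then ∫_0^∞ ∫_0^∞ e^{−√n(βx − αy)} g^Σ(x,y) dx dy = 1/(2πn(−α)β|Σ|^{1/2}) + o(n^{−1}) as n → ∞, where g^Σ is the density of the centered bivariate Gaussian with covariance Σ and |Σ| its determinant. -/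
open MeasureTheory Filter Real Set Topology

lemma qform_nonneg (M : Matrix (Fin 2) (Fin 2) ℝ) (hM : M.PosSemidef) (u v : ℝ) :
    0 ≤ M 0 0 * u ^ 2 + 2 * M 0 1 * u * v + M 1 1 * v ^ 2 := by
  have h := hM.dotProduct_mulVec_nonneg ![u, v]
  have hsym : M 1 0 = M 0 1 := by
    have := hM.1.apply 0 1
    simpa using this
  simp [dotProduct, Matrix.mulVec, Fin.sum_univ_two] at h
  rw [hsym] at h; nlinarith [h]

lemma sub_Ioi {E : Type*} [NormedAddCommGroup E] [NormedSpace ℝ E]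
    (f : ℝ → E) {s : ℝ} (hs : 0 < s) :
    ∫ x in Ioi (0:ℝ), f x = s⁻¹ • ∫ u in Ioi (0:ℝ), f (u / s) := by
  have h := integral_comp_mul_left_Ioi (fun u => f (u / s)) 0 hs
  simp only [mul_div_cancel_left₀ _ hs.ne', mul_zero] at h
  exact h

lemma exp_integral_Ioi {b : ℝ} (hb : 0 < b) :
    ∫ x in Ioi (0:ℝ), Real.exp (-(b * x)) = b⁻¹ := by
  have h := integral_comp_mul_left_Ioi (fun x => Real.exp (-x)) 0 hb
  simp only [mul_zero] at h
  rw [h, integral_exp_neg_Ioi_zero, smul_eq_mul, mul_one]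

theorem gaussian_quadrant_exponential_tilt_asymptotics
    (Sig : Matrix (Fin 2) (Fin 2) ℝ) (hSig : Sig.PosDef)
    (α β : ℝ) (hα : α < 0) (hβ : 0 < β) :
    Filter.Tendsto
      (fun n : ℕ => (n : ℝ) *
        ((∫ x in Set.Ioi (0 : ℝ), ∫ y in Set.Ioi (0 : ℝ),
            Real.exp (-Real.sqrt n * (β * x - α * y)) *
              ((2 * π * Real.sqrt Sig.det)⁻¹ *
                Real.exp (-(Sig⁻¹ 0 0 * x ^ 2 + 2 * Sig⁻¹ 0 1 * x * y +
                    Sig⁻¹ 1 1 * y ^ 2) / 2))) -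
          1 / (2 * π * n * (-α) * β * Real.sqrt Sig.det)))
      Filter.atTop (nhds 0) := by
  have hd : 0 < Real.sqrt Sig.det := Real.sqrt_pos.mpr hSig.det_pos
  set d := Real.sqrt Sig.det with hddef
  set c := (2 * π * d)⁻¹ with hcdef
  have hπ : (0:ℝ) < π := Real.pi_pos
  have hc : 0 < c := by positivity
  have hq0 : ∀ u v : ℝ,
      0 ≤ Sig⁻¹ 0 0 * u ^ 2 + 2 * Sig⁻¹ 0 1 * u * v + Sig⁻¹ 1 1 * v ^ 2 :=
    qform_nonneg Sig⁻¹ hSig.inv.posSemidef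
  set μ : Measure (ℝ × ℝ) :=
    (volume.restrict (Ioi (0:ℝ))).prod (volume.restrict (Ioi (0:ℝ))) with hμ
  set H : ℕ → ℝ × ℝ → ℝ := fun n p =>
    Real.exp (-(β * p.1 - α * p.2)) *
      (c * Real.exp (-(Sig⁻¹ 0 0 * p.1 ^ 2 + 2 * Sig⁻¹ 0 1 * p.1 * p.2 +
          Sig⁻¹ 1 1 * p.2 ^ 2) / (2 * n))) with hH
  set bound : ℝ × ℝ → ℝ := fun p =>
    Real.exp (-(β * p.1)) * (Real.exp (α * p.2) * c) with hbound
  have hbeq : ∀ p : ℝ × ℝ,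
      Real.exp (-(β * p.1 - α * p.2)) * (c * 1) = bound p := by
    intro p
    rw [hbound, mul_one, show -(β * p.1 - α * p.2) = -(β * p.1) + α * p.2 by ring,
      Real.exp_add]
    ring
  have hHle : ∀ (n : ℕ) (p : ℝ × ℝ), ‖H n p‖ ≤ bound p := by
    intro n p
    have h1 : Real.exp (-(Sig⁻¹ 0 0 * p.1 ^ 2 + 2 * Sig⁻¹ 0 1 * p.1 * p.2 +
        Sig⁻¹ 1 1 * p.2 ^ 2) / (2 * n)) ≤ 1 := by
      apply Real.exp_le_one_iff.mpr
      have := hq0 p.1 p.2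
      have h2n : (0:ℝ) ≤ 2 * n := by positivity
      rw [neg_div]
      simp only [neg_nonpos]
      exact div_nonneg this h2n
    have hnn : 0 ≤ H n p := by
      rw [hH]; positivity
    rw [Real.norm_eq_abs, abs_of_nonneg hnn, ← hbeq p]
    rw [hH]
    apply mul_le_mul_of_nonneg_left _ (Real.exp_nonneg _)
    exact mul_le_mul_of_nonneg_left h1 hc.le
  have hmeas : ∀ n : ℕ, AEStronglyMeasurable (H n) μ := by
    intro n
    apply Continuous.aestronglyMeasurable
    rw [hH]
    fun_prop
  have hbound_int : Integrable bound μ := by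
    have h1 : Integrable (fun x : ℝ => Real.exp (-(β * x)))
        (volume.restrict (Ioi (0:ℝ))) := by
      have := exp_neg_integrableOn_Ioi 0 hβ
      exact (by simpa [neg_mul] using this : IntegrableOn (fun x : ℝ => Real.exp (-(β * x))) (Ioi 0))
    have h2 : Integrable (fun y : ℝ => Real.exp (α * y) * c)
        (volume.restrict (Ioi (0:ℝ))) := by
      have h3 := exp_neg_integrableOn_Ioi 0 (neg_pos.mpr hα)
      have h4 : IntegrableOn (fun y : ℝ => Real.exp (α * y)) (Ioi 0) := by
        simpa [neg_mul, neg_neg] using h3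
      exact h4.mul_const c
    rw [hμ, hbound]
    exact h1.mul_prod h2
  have hint : ∀ n : ℕ, Integrable (H n) μ := fun n =>
    hbound_int.mono' (hmeas n) (Eventually.of_forall (hHle n))
  have hlim : ∀ p : ℝ × ℝ, Tendsto (fun n : ℕ => H n p) atTop (𝓝 (bound p)) := by
    intro p
    have h0 : Tendsto (fun n : ℕ => -(Sig⁻¹ 0 0 * p.1 ^ 2 + 2 * Sig⁻¹ 0 1 * p.1 * p.2 +
        Sig⁻¹ 1 1 * p.2 ^ 2) / (2 * n)) atTop (𝓝 0) := by
      have heq : (fun n : ℕ => -(Sig⁻¹ 0 0 * p.1 ^ 2 + 2 * Sig⁻¹ 0 1 * p.1 * p.2 +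
          Sig⁻¹ 1 1 * p.2 ^ 2) / (2 * n)) =
          fun n : ℕ => (-(Sig⁻¹ 0 0 * p.1 ^ 2 + 2 * Sig⁻¹ 0 1 * p.1 * p.2 +
          Sig⁻¹ 1 1 * p.2 ^ 2) / 2) * ((n:ℝ))⁻¹ := by
        funext n
        ring
      rw [heq]
      have h5 : Tendsto (fun n : ℕ => ((n:ℝ))⁻¹) atTop (𝓝 0) :=
        tendsto_inv_atTop_zero.comp tendsto_natCast_atTop_atTop
      simpa only [mul_zero] using h5.const_mul (-(Sig⁻¹ 0 0 * p.1 ^ 2 +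
          2 * Sig⁻¹ 0 1 * p.1 * p.2 + Sig⁻¹ 1 1 * p.2 ^ 2) / 2)
    have h1 : Tendsto (fun n : ℕ => Real.exp (-(Sig⁻¹ 0 0 * p.1 ^ 2 +
        2 * Sig⁻¹ 0 1 * p.1 * p.2 + Sig⁻¹ 1 1 * p.2 ^ 2) / (2 * n))) atTop (𝓝 1) := by
      have := (Real.continuous_exp.tendsto 0).comp h0
      simpa [Function.comp_def] using this
    have h2 := (h1.const_mul c).const_mul (Real.exp (-(β * p.1 - α * p.2)))
    rw [hbeq p] at h2
    exact h2
  have hDCT : Tendsto (fun n : ℕ => ∫ z, H n z ∂μ) atTop (𝓝 (∫ z, bound z ∂μ)) :=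
    tendsto_integral_of_dominated_convergence bound hmeas hbound_int
      (fun n => Eventually.of_forall (hHle n)) (Eventually.of_forall hlim)
  have hLval : ∫ z, bound z ∂μ = β⁻¹ * ((-α)⁻¹ * c) := by
    simp only [hμ, hbound]
    rw [integral_prod_mul (μ := volume.restrict (Ioi (0:ℝ))) (ν := volume.restrict (Ioi (0:ℝ)))
      (fun x : ℝ => Real.exp (-(β * x))) (fun y : ℝ => Real.exp (α * y) * c),
      integral_mul_const]
    rw [exp_integral_Ioi hβ]
    have : (∫ y in Ioi (0:ℝ), Real.exp (α * y)) = (-α)⁻¹ := by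
      rw [show (fun y : ℝ => Real.exp (α * y)) = fun y : ℝ => Real.exp (-(-α * y)) by
        funext y; ring_nf]
      exact exp_integral_Ioi (neg_pos.mpr hα)
    rw [this]
  have key : Tendsto (fun n : ℕ => (∫ z, H n z ∂μ) - β⁻¹ * ((-α)⁻¹ * c)) atTop (𝓝 0) := by
    rw [hLval] at hDCT
    simpa using hDCT.sub_const (β⁻¹ * ((-α)⁻¹ * c))
  apply key.congr'
  filter_upwards [eventually_ge_atTop 1] with n hn
  have hn0 : (0:ℝ) < n := by exact_mod_cast hn
  set s := Real.sqrt (n:ℝ) with hsdef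
  have hs : 0 < s := Real.sqrt_pos.mpr hn0
  have hs2 : s ^ 2 = (n:ℝ) := Real.sq_sqrt hn0.le
  have hT : (n:ℝ) * (1 / (2 * π * n * (-α) * β * d)) = β⁻¹ * ((-α)⁻¹ * c) := by
    rw [hcdef]
    field_simp [hn0.ne']
  have pointwise : ∀ u v : ℝ,
      Real.exp (-s * (β * (u / s) - α * (v / s))) *
        (c * Real.exp (-(Sig⁻¹ 0 0 * (u / s) ^ 2 + 2 * Sig⁻¹ 0 1 * (u / s) * (v / s) +
            Sig⁻¹ 1 1 * (v / s) ^ 2) / 2)) = H n (u, v) := by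
    intro u v
    have e1 : -s * (β * (u / s) - α * (v / s)) = -(β * u - α * v) := by
      field_simp
    have e2 : -(Sig⁻¹ 0 0 * (u / s) ^ 2 + 2 * Sig⁻¹ 0 1 * (u / s) * (v / s) +
        Sig⁻¹ 1 1 * (v / s) ^ 2) / 2 =
        -(Sig⁻¹ 0 0 * u ^ 2 + 2 * Sig⁻¹ 0 1 * u * v + Sig⁻¹ 1 1 * v ^ 2) / (2 * n) := by
      rw [← hs2]
      field_simp
    rw [e1, e2, hH]
  have hA : (n:ℝ) * (∫ x in Ioi (0:ℝ), ∫ y in Ioi (0:ℝ),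
      Real.exp (-s * (β * x - α * y)) *
        (c * Real.exp (-(Sig⁻¹ 0 0 * x ^ 2 + 2 * Sig⁻¹ 0 1 * x * y +
            Sig⁻¹ 1 1 * y ^ 2) / 2))) = ∫ z, H n z ∂μ := by
    rw [sub_Ioi (fun x => ∫ y in Ioi (0:ℝ),
      Real.exp (-s * (β * x - α * y)) *
        (c * Real.exp (-(Sig⁻¹ 0 0 * x ^ 2 + 2 * Sig⁻¹ 0 1 * x * y +
            Sig⁻¹ 1 1 * y ^ 2) / 2))) hs]
    have inner_sub : ∀ u : ℝ, (∫ y in Ioi (0:ℝ),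
        Real.exp (-s * (β * (u / s) - α * y)) *
          (c * Real.exp (-(Sig⁻¹ 0 0 * (u / s) ^ 2 + 2 * Sig⁻¹ 0 1 * (u / s) * y +
              Sig⁻¹ 1 1 * y ^ 2) / 2))) =
        s⁻¹ • ∫ v in Ioi (0:ℝ), H n (u, v) := by
      intro u
      rw [sub_Ioi (fun y => Real.exp (-s * (β * (u / s) - α * y)) *
        (c * Real.exp (-(Sig⁻¹ 0 0 * (u / s) ^ 2 + 2 * Sig⁻¹ 0 1 * (u / s) * y +
            Sig⁻¹ 1 1 * y ^ 2) / 2))) hs]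
      congr 1
      apply integral_congr_ae
      filter_upwards with v
      exact pointwise u v
    simp only [inner_sub]
    rw [integral_smul]
    rw [integral_prod _ (hint n)]
    simp only [smul_eq_mul]
    have h6 : (n:ℝ) * (s⁻¹ * s⁻¹) = 1 := by
      rw [← mul_inv, ← sq, hs2, mul_inv_cancel₀ hn0.ne']
    generalize (∫ u in Ioi (0:ℝ), ∫ v in Ioi (0:ℝ), H n (u, v)) = X
    linear_combination X * h6
  rw [← hA, ← hT]
  ring
end

section
/- Let Σ be a 2×2 positive definite symmetric matrix with inverse entries ρ_{ij}. Then uniformly in t ∈ ℝ, as n → ∞: ∫_0^∞ ∫_{−∞}^t e^{−x} exp(−(x/√n, y) Σ^{−1} (x/√n, y)^T) dy dx = ∫_{−∞}^t e^{−y² ρ_{22}/2} dy + O(n^{−1/2}), where the implicit constant is independent of t. -/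
open MeasureTheory Filter Real Set

private lemma abs_exp_neg_sub_one_le (u : ℝ) :
    |Real.exp (-u) - 1| ≤ |u| * (1 + Real.exp (-u)) := by
  have h1 := Real.add_one_le_exp (-u)
  have h2 := Real.add_one_le_exp u
  have h3 : Real.exp u * Real.exp (-u) = 1 := by rw [← Real.exp_add]; simp
  have h4 := mul_le_mul_of_nonneg_right h2 (Real.exp_pos (-u)).le
  rcases abs_cases (Real.exp (-u) - 1) with ⟨he1, he2⟩ | ⟨he1, he2⟩ <;>
    rcases abs_cases u with ⟨hu1, hu2⟩ | ⟨hu1, hu2⟩ <;>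
    nlinarith [Real.exp_pos u, Real.exp_pos (-u)]

private lemma sq_le_exp_half (x : ℝ) (hx : 0 ≤ x) : x ^ 2 ≤ 16 * Real.exp (x / 2) := by
  have h := Real.add_one_le_exp (x / 4)
  have h2 : Real.exp (x / 4) * Real.exp (x / 4) = Real.exp (x / 2) := by
    rw [← Real.exp_add]; ring_nf
  nlinarith [Real.exp_pos (x / 4)]

private lemma le_exp_half (x : ℝ) (hx : 0 ≤ x) : x ≤ 2 * Real.exp (x / 2) := by
  have h := Real.add_one_le_exp (x / 2)
  linarith

set_option maxHeartbeats 4000000 in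
private lemma tilted_aux (r11 r12 r22 : ℝ) (h11 : 0 < r11) (h22 : 0 < r22)
    (hD : 0 < r11 * r22 - r12 * r12) :
    ∃ C : ℝ, ∀ n : ℕ, 1 ≤ n → ∀ t : ℝ,
      |(∫ x in Set.Ioi (0 : ℝ), ∫ y in Set.Iio t,
          Real.exp (-x) *
            Real.exp (-(r11 * x ^ 2 / (2 * n) +
                r12 * x * y / Real.sqrt n +
                r22 * y ^ 2 / 2))) -
        ∫ y in Set.Iio t, Real.exp (-r22 * y ^ 2 / 2)| ≤
      C / Real.sqrt n := by
  -- constants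
  set κ : ℝ := min (r22 / 2) ((r11 * r22 - r12 * r12) / (2 * r11)) with hκdef
  have hκ : 0 < κ := lt_min (by linarith) (by positivity)
  have hκ22 : κ ≤ r22 / 2 := min_le_left _ _
  -- the quadratic form bound
  have hquad : ∀ a b : ℝ, κ * b ^ 2 ≤ r11 * a ^ 2 / 2 + r12 * a * b + r22 * b ^ 2 / 2 := by
    intro a b
    have h1 : κ ≤ (r11 * r22 - r12 * r12) / (2 * r11) := min_le_right _ _
    have h3 : (r11 * r22 - r12 * r12) * b ^ 2 ≤
        r11 * (r11 * a ^ 2 + 2 * r12 * a * b + r22 * b ^ 2) := by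
      nlinarith [sq_nonneg (r11 * a + r12 * b)]
    have h4 : (r11 * r22 - r12 * r12) / (2 * r11) * b ^ 2 ≤
        r11 * a ^ 2 / 2 + r12 * a * b + r22 * b ^ 2 / 2 := by
      rw [div_mul_eq_mul_div, div_le_iff₀ (by positivity)]
      nlinarith
    calc κ * b ^ 2 ≤ (r11 * r22 - r12 * r12) / (2 * r11) * b ^ 2 :=
          mul_le_mul_of_nonneg_right h1 (sq_nonneg b)
      _ ≤ _ := h4
  -- gaussian integrals
  have hgauss : Integrable (fun y : ℝ => Real.exp (-κ * y ^ 2)) := integrable_exp_neg_mul_sq hκ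
  have habsgauss : Integrable (fun y : ℝ => |y| * Real.exp (-κ * y ^ 2)) := by
    refine (integrable_mul_exp_neg_mul_sq hκ).abs.congr (Filter.Eventually.of_forall fun y => ?_)
    simp [abs_mul, abs_of_pos (Real.exp_pos (-κ * y ^ 2))]
  set A : ℝ := ∫ y : ℝ, Real.exp (-κ * y ^ 2) with hA
  set B : ℝ := ∫ y : ℝ, |y| * Real.exp (-κ * y ^ 2) with hB
  have hA0 : 0 ≤ A := integral_nonneg fun y => (Real.exp_pos _).le
  have hB0 : 0 ≤ B := integral_nonneg fun y => by positivity
  -- the dominating functions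
  set H : ℝ → ℝ → ℝ := fun x y =>
    2 * Real.exp (-x) * (r11 * x ^ 2 / 2 + |r12| * x * |y|) * Real.exp (-κ * y ^ 2) with hH
  set H1 : ℝ → ℝ := fun x =>
    2 * Real.exp (-x) * (r11 * x ^ 2 / 2 * A + |r12| * x * B) with hH1
  have hHint : ∀ x : ℝ, Integrable (H x) := by
    intro x
    have : Integrable (fun y : ℝ =>
        (2 * Real.exp (-x) * (r11 * x ^ 2 / 2)) * Real.exp (-κ * y ^ 2) +
        (2 * Real.exp (-x) * (|r12| * x)) * (|y| * Real.exp (-κ * y ^ 2))) :=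
      (hgauss.const_mul _).add (habsgauss.const_mul _)
    refine this.congr (Filter.Eventually.of_forall fun y => ?_)
    simp only [hH]; ring
  have hHval : ∀ x : ℝ, (∫ y : ℝ, H x y) = H1 x := by
    intro x
    have heq : (fun y : ℝ => H x y) = fun y : ℝ =>
        (2 * Real.exp (-x) * (r11 * x ^ 2 / 2)) * Real.exp (-κ * y ^ 2) +
        (2 * Real.exp (-x) * (|r12| * x)) * (|y| * Real.exp (-κ * y ^ 2)) := by
      funext y; simp only [hH]; ring
    rw [heq, integral_add ((hgauss.const_mul _)) ((habsgauss.const_mul _)),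
      integral_const_mul, integral_const_mul, ← hA, ← hB]
    simp only [hH1]; ring
  have hHnonneg : ∀ x : ℝ, 0 ≤ x → ∀ y : ℝ, 0 ≤ H x y := by
    intro x hx y; simp only [hH]; positivity
  -- integrability of H1 on Ioi 0
  have hH1int : IntegrableOn H1 (Set.Ioi (0 : ℝ)) := by
    have hdom : IntegrableOn (fun x : ℝ =>
        (32 * (r11 * A / 2) + 4 * (|r12| * B)) * Real.exp (-(2⁻¹ : ℝ) * x)) (Set.Ioi 0) :=
      (exp_neg_integrableOn_Ioi 0 (by norm_num : (0:ℝ) < 2⁻¹)).const_mul _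
    refine hdom.mono' ?_ ?_
    · exact (Continuous.aestronglyMeasurable (by fun_prop)).restrict
    · filter_upwards [self_mem_ae_restrict measurableSet_Ioi] with x hx
      have hx0 : (0:ℝ) ≤ x := (le_of_lt hx)
      have h2 := sq_le_exp_half x hx0
      have h1 := le_exp_half x hx0
      have hmul : Real.exp (-x) * Real.exp (x / 2) = Real.exp (-(2⁻¹ : ℝ) * x) := by
        rw [← Real.exp_add]; ring_nf
      have hH1x : 0 ≤ H1 x := by simp only [hH1]; positivity
      rw [Real.norm_eq_abs, abs_of_nonneg hH1x]
      simp only [hH1]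
      rw [← hmul]
      have hA' := mul_le_mul_of_nonneg_right (mul_le_mul_of_nonneg_left h2 h11.le) hA0
      have hB' := mul_le_mul_of_nonneg_right (mul_le_mul_of_nonneg_left h1 (abs_nonneg r12)) hB0
      have hgoal : 2 * (r11 * x ^ 2 / 2 * A + |r12| * x * B)
          ≤ (32 * (r11 * A / 2) + 4 * (|r12| * B)) * Real.exp (x / 2) := by nlinarith
      have := mul_le_mul_of_nonneg_right hgoal (Real.exp_pos (-x)).le
      nlinarith [Real.exp_pos (-x)]
  refine ⟨∫ x in Set.Ioi (0:ℝ), H1 x, ?_⟩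
  intro n hn t
  have hn1 : (1 : ℝ) ≤ n := by exact_mod_cast hn
  have hn0 : (0 : ℝ) < n := by linarith
  have hs0 : 0 < Real.sqrt n := Real.sqrt_pos.mpr hn0
  have hsn : Real.sqrt n ≤ n := by
    have h := Real.sqrt_le_sqrt (show (n:ℝ) ≤ (n:ℝ) ^ 2 by nlinarith)
    rwa [Real.sqrt_sq hn0.le] at h
  -- the integrand and its pointwise bound
  set f : ℝ → ℝ → ℝ := fun x y =>
    Real.exp (-x) * Real.exp (-(r11 * x ^ 2 / (2 * n) +
      r12 * x * y / Real.sqrt n + r22 * y ^ 2 / 2)) with hf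
  have hQge : ∀ x y : ℝ, κ * y ^ 2 ≤
      r11 * x ^ 2 / (2 * n) + r12 * x * y / Real.sqrt n + r22 * y ^ 2 / 2 := by
    intro x y
    have h := hquad (x / Real.sqrt n) y
    have heq : r11 * (x / Real.sqrt n) ^ 2 / 2 + r12 * (x / Real.sqrt n) * y + r22 * y ^ 2 / 2
        = r11 * x ^ 2 / (2 * n) + r12 * x * y / Real.sqrt n + r22 * y ^ 2 / 2 := by
      rw [div_pow, Real.sq_sqrt hn0.le]; ring
    linarith [heq ▸ h]
  -- pointwise difference bound
  have hpt : ∀ x y : ℝ, 0 ≤ x →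
      ‖f x y - Real.exp (-x) * Real.exp (-r22 * y ^ 2 / 2)‖ ≤ H x y / Real.sqrt n := by
    intro x y hx
    set u : ℝ := r11 * x ^ 2 / (2 * n) + r12 * x * y / Real.sqrt n with hu
    set G0 : ℝ := Real.exp (-(r22 * y ^ 2 / 2)) with hG0
    set E : ℝ := Real.exp (-κ * y ^ 2) with hE
    set P : ℝ := r11 * x ^ 2 / 2 + |r12| * x * |y| with hP
    have hdiff : f x y - Real.exp (-x) * Real.exp (-r22 * y ^ 2 / 2)
        = Real.exp (-x) * (G0 * (Real.exp (-u) - 1)) := by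
      simp only [hf, hG0, hu]
      rw [show -(r11 * x ^ 2 / (2 * ↑n) + r12 * x * y / Real.sqrt ↑n + r22 * y ^ 2 / 2)
          = -(r11 * x ^ 2 / (2 * ↑n) + r12 * x * y / Real.sqrt ↑n) + -(r22 * y ^ 2 / 2) by ring,
        Real.exp_add,
        show -r22 * y ^ 2 / 2 = -(r22 * y ^ 2 / 2) by ring]
      ring
    have hG0E : G0 ≤ E := by
      apply Real.exp_le_exp.mpr
      nlinarith [sq_nonneg y]
    have hG0uE : G0 * Real.exp (-u) ≤ E := by
      rw [← Real.exp_add]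
      apply Real.exp_le_exp.mpr
      have := hQge x y
      simp only [hu]
      nlinarith
    have hP0 : 0 ≤ P := by simp only [hP]; positivity
    have huP : |u| ≤ P / Real.sqrt n := by
      have h1 : |u| ≤ |r11 * x ^ 2 / (2 * n)| + |r12 * x * y / Real.sqrt n| := abs_add_le _ _
      have h2 : |r11 * x ^ 2 / (2 * n)| = r11 * x ^ 2 / (2 * n) := abs_of_nonneg (by positivity)
      have h3 : |r12 * x * y / Real.sqrt n| = |r12| * x * |y| / Real.sqrt n := by
        rw [abs_div, abs_of_pos hs0, abs_mul, abs_mul, abs_of_nonneg hx]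
      have h4 : r11 * x ^ 2 / (2 * n) ≤ r11 * x ^ 2 / (2 * Real.sqrt n) := by
        rw [div_le_div_iff₀ (by positivity) (by positivity)]
        nlinarith [mul_le_mul_of_nonneg_left hsn (by positivity : (0:ℝ) ≤ r11 * x ^ 2 * 2)]
      have h5 : r11 * x ^ 2 / (2 * Real.sqrt n) + |r12| * x * |y| / Real.sqrt n
          = P / Real.sqrt n := by
        simp only [hP]; field_simp
      linarith
    have hG00 : 0 ≤ G0 := (Real.exp_pos _).le
    have key : G0 * |Real.exp (-u) - 1| ≤ (P / Real.sqrt n) * (2 * E) := by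
      have k1 : G0 * |Real.exp (-u) - 1| ≤ |u| * (G0 + G0 * Real.exp (-u)) := by
        have := mul_le_mul_of_nonneg_left (abs_exp_neg_sub_one_le u) hG00
        nlinarith
      have k2 : |u| * (G0 + G0 * Real.exp (-u)) ≤ (P / Real.sqrt n) * (2 * E) := by
        apply mul_le_mul huP (by linarith) ?_ (by positivity)
        positivity
      linarith
    rw [hdiff, Real.norm_eq_abs, abs_mul, abs_mul, abs_of_pos (Real.exp_pos (-x)),
      abs_of_nonneg hG00]
    calc Real.exp (-x) * (G0 * |Real.exp (-u) - 1|)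
        ≤ Real.exp (-x) * ((P / Real.sqrt n) * (2 * E)) := by
          exact mul_le_mul_of_nonneg_left key (Real.exp_pos _).le
      _ = H x y / Real.sqrt n := by simp only [hH, hP, hE]; ring
  -- product integrability
  have hfcont : Continuous (fun p : ℝ × ℝ => f p.1 p.2) := by
    simp only [hf]; fun_prop
  have hexpIoi : IntegrableOn (fun x : ℝ => Real.exp (-x)) (Set.Ioi 0) := by
    simpa using exp_neg_integrableOn_Ioi 0 (by norm_num : (0:ℝ) < 1)
  have hprod : Integrable (fun p : ℝ × ℝ => f p.1 p.2)
      ((volume.restrict (Set.Ioi 0)).prod (volume.restrict (Set.Iio t))) := by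
    have hdom : Integrable (fun p : ℝ × ℝ => Real.exp (-p.1) * Real.exp (-κ * p.2 ^ 2))
        ((volume.restrict (Set.Ioi 0)).prod (volume.restrict (Set.Iio t))) :=
      Integrable.mul_prod hexpIoi hgauss.restrict
    refine hdom.mono' hfcont.aestronglyMeasurable ?_
    refine Filter.Eventually.of_forall fun p => ?_
    simp only [hf, Real.norm_eq_abs, abs_mul, abs_of_pos (Real.exp_pos _)]
    apply mul_le_mul_of_nonneg_left _ (Real.exp_pos _).le
    apply Real.exp_le_exp.mpr
    linarith [hQge p.1 p.2]
  have hFint : Integrable (fun x => ∫ y in Set.Iio t, f x y) (volume.restrict (Set.Ioi 0)) :=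
    hprod.integral_prod_left
  have hslice : ∀ᵐ x ∂(volume.restrict (Set.Ioi 0)),
      Integrable (fun y => f x y) (volume.restrict (Set.Iio t)) :=
    hprod.prod_right_ae
  -- g integrable
  have hg : Integrable (fun y : ℝ => Real.exp (-r22 * y ^ 2 / 2)) := by
    refine (integrable_exp_neg_mul_sq (by linarith : (0:ℝ) < r22 / 2)).congr
      (Filter.Eventually.of_forall fun y => ?_)
    have hy : -(r22 / 2) * y ^ 2 = -r22 * y ^ 2 / 2 := by ring
    simp only [hy]
  set J : ℝ := ∫ y in Set.Iio t, Real.exp (-r22 * y ^ 2 / 2) with hJ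
  have hGint : Integrable (fun x : ℝ => Real.exp (-x) * J) (volume.restrict (Set.Ioi 0)) :=
    hexpIoi.mul_const _
  -- rewrite J as an integral over Ioi 0
  have hJeq : J = ∫ x in Set.Ioi (0:ℝ), Real.exp (-x) * J := by
    rw [integral_mul_const, integral_exp_neg_Ioi_zero, one_mul]
  -- main difference rewriting
  show |(∫ x in Set.Ioi (0:ℝ), ∫ y in Set.Iio t, f x y) - J| ≤
    (∫ x in Set.Ioi (0:ℝ), H1 x) / Real.sqrt ↑n
  rw [hJeq]
  rw [← integral_sub hFint hGint, ← Real.norm_eq_abs]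
  have hH1div : Integrable (fun x => H1 x / Real.sqrt n) (volume.restrict (Set.Ioi 0)) :=
    hH1int.div_const _
  calc ‖∫ x in Set.Ioi (0:ℝ), ((∫ y in Set.Iio t, f x y) - Real.exp (-x) * J)‖
      ≤ ∫ x in Set.Ioi (0:ℝ), H1 x / Real.sqrt n := by
        refine norm_integral_le_of_norm_le hH1div ?_
        filter_upwards [self_mem_ae_restrict measurableSet_Ioi, hslice] with x hx hxint
        have hx0 : (0:ℝ) ≤ x := le_of_lt hx
        have hsub : (∫ y in Set.Iio t, f x y) - Real.exp (-x) * J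
            = ∫ y in Set.Iio t, (f x y - Real.exp (-x) * Real.exp (-r22 * y ^ 2 / 2)) := by
          rw [integral_sub hxint ((hg.restrict).const_mul _), hJ, ← integral_const_mul]
        rw [hsub]
        calc ‖∫ y in Set.Iio t, (f x y - Real.exp (-x) * Real.exp (-r22 * y ^ 2 / 2))‖
            ≤ ∫ y in Set.Iio t, H x y / Real.sqrt n := by
              refine norm_integral_le_of_norm_le (((hHint x).restrict).div_const _) ?_
              exact Filter.Eventually.of_forall fun y => hpt x y hx0
          _ = (∫ y in Set.Iio t, H x y) / Real.sqrt n := by rw [integral_div]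
          _ ≤ (∫ y : ℝ, H x y) / Real.sqrt n := by
              apply div_le_div_of_nonneg_right _ hs0.le
              exact setIntegral_le_integral (hHint x)
                (Filter.Eventually.of_forall fun y => hHnonneg x hx0 y)
          _ = H1 x / Real.sqrt n := by rw [hHval]
    _ = (∫ x in Set.Ioi (0:ℝ), H1 x) / Real.sqrt n := by rw [integral_div]

theorem tilted_gaussian_uniform_in_t_asymptotics
    (Sig : Matrix (Fin 2) (Fin 2) ℝ) (hSig : Sig.PosDef) :
    ∃ C : ℝ, ∀ n : ℕ, 1 ≤ n → ∀ t : ℝ,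
      |(∫ x in Set.Ioi (0 : ℝ), ∫ y in Set.Iio t,
          Real.exp (-x) *
            Real.exp (-(Sig⁻¹ 0 0 * x ^ 2 / (2 * n) +
                Sig⁻¹ 0 1 * x * y / Real.sqrt n +
                Sig⁻¹ 1 1 * y ^ 2 / 2))) -
        ∫ y in Set.Iio t, Real.exp (-(Sig⁻¹ 1 1) * y ^ 2 / 2)| ≤
      C / Real.sqrt n := by
  have hM : (Sig⁻¹).PosDef := hSig.inv
  have hsym : Sig⁻¹ 1 0 = Sig⁻¹ 0 1 := by
    have := congrFun (congrFun hM.isHermitian 1) 0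
    simpa [Matrix.conjTranspose_apply] using this.symm
  have h00 : 0 < Sig⁻¹ 0 0 := by
    exact hM.diag_pos
  have h11 : 0 < Sig⁻¹ 1 1 := by
    exact hM.diag_pos
  have hdet : 0 < Sig⁻¹.det := hM.det_pos
  rw [Matrix.det_fin_two] at hdet
  rw [hsym] at hdet
  exact tilted_aux (Sig⁻¹ 0 0) (Sig⁻¹ 0 1) (Sig⁻¹ 1 1) h00 h11 (by linarith)
end

section
/- Let V, W be linearly independent Orlicz functions with liminf_{x→∞} V(x)/W(x) > 0, R > 0, and m as above. Then there exists ε > 0 such that for every t ∈ (m−ε, m) there is a pair (α,β) ∈ (−∞,0)² with ∇φ(α,β) = (R, t), where φ(α,β) = log ∫_ℝ e^{αV(x)+βW(x)} dx. -/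
open MeasureTheory Filter Real Set

namespace GradSurj

section basics
variable {V : ℝ → ℝ}

lemma abs_eq (hsym : ∀ x, V (-x) = V x) (x : ℝ) : V |x| = V x := by
  rcases abs_cases x with ⟨h, _⟩ | ⟨h, _⟩
  · rw [h]
  · rw [h, hsym]

lemma mono_nonneg (hsym : ∀ x, V (-x) = V x) (hconv : ConvexOn ℝ Set.univ V)
    {x y : ℝ} (hx : 0 ≤ x) (hxy : x ≤ y) : V x ≤ V y := by
  rcases eq_or_lt_of_le (hx.trans hxy) with h | hy
  · have hx0 : x = 0 := le_antisymm (h ▸ hxy) hx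
    have hy0 : y = 0 := h.symm
    rw [hx0, hy0]
  · have ha : 0 ≤ (y - x) / (2 * y) := by
      apply div_nonneg (by linarith) (by linarith)
    have hb : 0 ≤ (x + y) / (2 * y) := by
      apply div_nonneg (by linarith) (by linarith)
    have hab : (y - x) / (2 * y) + (x + y) / (2 * y) = 1 := by
      field_simp; ring
    have key := hconv.2 (Set.mem_univ (-y)) (Set.mem_univ y) ha hb hab
    simp only [smul_eq_mul] at key
    have hxe : (y - x) / (2 * y) * (-y) + (x + y) / (2 * y) * y = x := by
      field_simp; ring
    rw [hxe, hsym] at key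
    calc V x ≤ (y - x) / (2 * y) * V y + (x + y) / (2 * y) * V y := key
    _ = V y := by field_simp; ring

lemma strict_mono_nonneg (hsym : ∀ x, V (-x) = V x) (hconv : ConvexOn ℝ Set.univ V)
    (hzero : ∀ x, V x = 0 ↔ x = 0) (hnonneg : ∀ x, 0 ≤ V x)
    {x y : ℝ} (hx : 0 ≤ x) (hxy : x < y) : V x < V y := by
  have hy0 : 0 < y := hx.trans_lt hxy
  have hVy : 0 < V y := (hnonneg y).lt_of_ne fun h => hy0.ne' ((hzero y).mp h.symm)
  rcases eq_or_lt_of_le hx with h | hx0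
  · rw [← h, (hzero 0).mpr rfl]; exact hVy
  · have key := hconv.2 (Set.mem_univ (0:ℝ)) (Set.mem_univ y)
      (by
        have : x / y < 1 := (div_lt_one hy0).mpr hxy
        linarith : (0:ℝ) ≤ 1 - x / y)
      (by positivity : (0:ℝ) ≤ x / y) (by ring)
    simp only [smul_eq_mul] at key
    have hxe : (1 - x / y) * (0:ℝ) + (x / y) * y = x := by field_simp; ring
    rw [hxe, (hzero 0).mpr rfl] at key
    have hxylt : x / y < 1 := (div_lt_one hy0).mpr hxy
    calc V x ≤ (1 - x/y) * 0 + x/y * V y := key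
    _ = x/y * V y := by ring
    _ < 1 * V y := mul_lt_mul_of_pos_right hxylt hVy
    _ = V y := one_mul _

lemma growth (hsym : ∀ x, V (-x) = V x) (hconv : ConvexOn ℝ Set.univ V)
    (hzero : ∀ x, V x = 0 ↔ x = 0) {x : ℝ} (hx : 1 ≤ |x|) :
    V 1 * |x| ≤ V x := by
  have h0 : V 0 = 0 := (hzero 0).mpr rfl
  have hax : 0 < |x| := by linarith
  have key := hconv.2 (Set.mem_univ (0:ℝ)) (Set.mem_univ |x|)
    (by
      have : 1/|x| ≤ 1 := by rw [div_le_one hax]; exact hx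
      linarith : (0:ℝ) ≤ 1 - 1/|x|)
    (by positivity : (0:ℝ) ≤ 1/|x|) (by ring)
  simp only [smul_eq_mul] at key
  have h1 : (1 - 1/|x|) * (0:ℝ) + (1/|x|) * |x| = 1 := by field_simp; ring
  rw [h1, h0, abs_eq hsym] at key
  have h2 : V 1 ≤ 1/|x| * V x := by linarith
  calc V 1 * |x| ≤ (1/|x| * V x) * |x| := mul_le_mul_of_nonneg_right h2 hax.le
  _ = V x := by field_simp

end basics
lemma integrable_of_even_bound {f : ℝ → ℝ} (hf : Continuous f) (heven : ∀ x, f (-x) = f x)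
    {C k : ℝ} (hk : 0 < k) (hb : ∀ x : ℝ, 1 ≤ x → ‖f x‖ ≤ C * Real.exp (-k * x)) :
    Integrable f := by
  apply hf.locallyIntegrable.integrable_of_isBigO_atTop_of_norm_isNegInvariant
    (g := fun x => Real.exp (-k * x))
  · exact Filter.Eventually.of_forall fun x => by simp [heven]
  · rw [Asymptotics.isBigO_iff]
    refine ⟨C, ?_⟩
    filter_upwards [Filter.eventually_ge_atTop 1] with x hx
    calc ‖f x‖ ≤ C * Real.exp (-k * x) := hb x hx
    _ ≤ C * ‖Real.exp (-k * x)‖ := by rw [Real.norm_eq_abs, abs_of_pos (Real.exp_pos _)]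
  · exact ⟨Set.Ioi 0, Ioi_mem_atTop 0, exp_neg_integrableOn_Ioi 0 hk⟩

lemma self_mul_exp_le {a y : ℝ} (ha : a < 0) (hy : 0 ≤ y) :
    y * Real.exp (a * y) ≤ (-2/a) * Real.exp ((a/2) * y) := by
  have hna : (0:ℝ) < -2/a := div_pos_of_neg_of_neg (by norm_num) ha
  have h2 : -(a/2) * y ≤ Real.exp (-(a/2) * y) := by
    nlinarith [Real.add_one_le_exp (-(a/2) * y)]
  have h1 : y ≤ (-2/a) * Real.exp (-(a/2) * y) := by
    have h3 : (-2/a) * (-(a/2) * y) = y := by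
      rw [div_mul_eq_mul_div, div_eq_iff ha.ne]
      ring
    calc y = (-2/a) * (-(a/2) * y) := h3.symm
    _ ≤ (-2/a) * Real.exp (-(a/2) * y) := mul_le_mul_of_nonneg_left h2 hna.le
  calc y * Real.exp (a * y) ≤ ((-2/a) * Real.exp (-(a/2) * y)) * Real.exp (a * y) :=
        mul_le_mul_of_nonneg_right h1 (Real.exp_pos _).le
  _ = (-2/a) * Real.exp ((a/2) * y) := by
      rw [mul_assoc, ← Real.exp_add]; ring_nf



section setup

structure Setup (V W : ℝ → ℝ) : Prop where
  hVsym : ∀ x, V (-x) = V x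
  hVconv : ConvexOn ℝ Set.univ V
  hVnonneg : ∀ x, 0 ≤ V x
  hVzero : ∀ x, V x = 0 ↔ x = 0
  hWsym : ∀ x, W (-x) = W x
  hWconv : ConvexOn ℝ Set.univ W
  hWnonneg : ∀ x, 0 ≤ W x
  hWzero : ∀ x, W x = 0 ↔ x = 0
  hli : ∀ a b : ℝ, (∀ x, a * V x + b * W x = 0) → a = 0 ∧ b = 0
  hliminf : 0 < Filter.liminf (fun x => V x / W x) Filter.atTop

variable {V W : ℝ → ℝ}

lemma Setup.Vcont (h : Setup V W) : Continuous V := by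
  rw [← continuousOn_univ]
  exact h.hVconv.continuousOn isOpen_univ

lemma Setup.Wcont (h : Setup V W) : Continuous W := by
  rw [← continuousOn_univ]
  exact h.hWconv.continuousOn isOpen_univ

lemma Setup.V1pos (h : Setup V W) : 0 < V 1 :=
  (h.hVnonneg 1).lt_of_ne fun h1 => one_ne_zero ((h.hVzero 1).mp h1.symm)

lemma Setup.Vgrowth (h : Setup V W) {x : ℝ} (hx : 1 ≤ |x|) : V 1 * |x| ≤ V x :=
  growth h.hVsym h.hVconv h.hVzero hx

/-- W is dominated by V up to constants. -/
lemma Setup.Wbound (h : Setup V W) : ∃ c : ℝ, 0 < c ∧ ∃ D : ℝ, 0 ≤ D ∧ ∀ x, W x ≤ V x / c + D := by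
  set l := Filter.liminf (fun x => V x / W x) Filter.atTop with hl
  have hco : Filter.IsBoundedUnder (· ≥ ·) Filter.atTop (fun x => V x / W x) :=
    ⟨0, by
      rw [Filter.eventually_map]
      exact Filter.Eventually.of_forall fun x => div_nonneg (h.hVnonneg x) (h.hWnonneg x)⟩
  have hev : ∀ᶠ x in Filter.atTop, l / 2 < V x / W x :=
    Filter.eventually_lt_of_lt_liminf (by linarith [h.hliminf] : l / 2 < l) hco
  obtain ⟨N, hN⟩ := Filter.eventually_atTop.mp hev
  set N' := max N 1 with hN'
  have hN1 : (1:ℝ) ≤ N' := le_max_right _ _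
  refine ⟨l / 2, by linarith [h.hliminf], W N', h.hWnonneg N', fun x => ?_⟩
  have key : ∀ y : ℝ, N' ≤ y → W y ≤ V y / (l / 2) := by
    intro y hy
    have hWy : 0 < W y := (h.hWnonneg y).lt_of_ne fun hh =>
      (by linarith : (0:ℝ) < y).ne' ((h.hWzero y).mp hh.symm)
    have := hN y (le_trans (le_max_left _ _) hy)
    rw [lt_div_iff₀ hWy] at this
    rw [le_div_iff₀ (by linarith [h.hliminf] : (0:ℝ) < l / 2)]
    linarith
  rcases le_or_gt N' |x| with hcase | hcase
  · have : W |x| ≤ V |x| / (l / 2) := key _ hcase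
    rw [abs_eq h.hWsym, abs_eq h.hVsym] at this
    have := h.hWnonneg N'
    linarith
  · have hWx : W x ≤ W N' := by
      rw [← abs_eq h.hWsym]
      exact mono_nonneg h.hWsym h.hWconv (abs_nonneg x) hcase.le
    have : 0 ≤ V x / (l / 2) :=
      div_nonneg (h.hVnonneg x) (by linarith [h.hliminf])
    linarith

end setup

section integrab
variable {V W : ℝ → ℝ}

lemma Setup.exp_VK (h : Setup V W) {a : ℝ} (ha : a < 0) {x : ℝ} (hx : 1 ≤ x) :
    Real.exp (a * V x) ≤ Real.exp (a * V 1 * x) := by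
  apply Real.exp_le_exp.mpr
  have h1 : V 1 * x ≤ V x := by
    have := h.Vgrowth (x := x) (by rw [abs_of_pos (by linarith)]; exact hx)
    rwa [abs_of_pos (by linarith : (0:ℝ) < x)] at this
  rw [mul_assoc]
  exact mul_le_mul_of_nonpos_left h1 ha.le

lemma Setup.exp_add_le (h : Setup V W) {α β : ℝ} (hβ : β ≤ 0) (x : ℝ) :
    Real.exp (α * V x + β * W x) ≤ Real.exp (α * V x) := by
  apply Real.exp_le_exp.mpr
  nlinarith [h.hWnonneg x]

lemma Setup.int_exp (h : Setup V W) {α β : ℝ} (hα : α < 0) (hβ : β ≤ 0) :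
    Integrable (fun x => Real.exp (α * V x + β * W x)) := by
  have hk : 0 < -(α * V 1) := by nlinarith [h.V1pos]
  apply integrable_of_even_bound (C := 1) (k := -(α * V 1)) ?_ ?_ hk
  · intro x hx
    rw [Real.norm_eq_abs, abs_of_pos (Real.exp_pos _), one_mul, neg_neg]
    calc Real.exp (α * V x + β * W x) ≤ Real.exp (α * V x) := h.exp_add_le hβ x
    _ ≤ Real.exp (α * V 1 * x) := h.exp_VK hα hx
    _ = Real.exp (α * V 1 * x) := rfl
  · exact ((continuous_const.mul h.Vcont).add (continuous_const.mul h.Wcont)).rexp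
  · intro x; rw [h.hVsym, h.hWsym]

lemma Setup.int_V_exp (h : Setup V W) {α β : ℝ} (hα : α < 0) (hβ : β ≤ 0) :
    Integrable (fun x => V x * Real.exp (α * V x + β * W x)) := by
  have hV1 := h.V1pos
  have hk : 0 < -(α / 2 * V 1) := by nlinarith
  apply integrable_of_even_bound (C := -2/α) (k := -(α / 2 * V 1)) ?_ ?_ hk
  · intro x hx
    have hfx : 0 ≤ V x * Real.exp (α * V x + β * W x) :=
      mul_nonneg (h.hVnonneg x) (Real.exp_pos _).le
    rw [Real.norm_eq_abs, abs_of_nonneg hfx, neg_neg]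
    calc V x * Real.exp (α * V x + β * W x) ≤ V x * Real.exp (α * V x) :=
          mul_le_mul_of_nonneg_left (h.exp_add_le hβ x) (h.hVnonneg x)
    _ ≤ (-2/α) * Real.exp ((α/2) * V x) := self_mul_exp_le hα (h.hVnonneg x)
    _ ≤ (-2/α) * Real.exp (α / 2 * V 1 * x) := by
        apply mul_le_mul_of_nonneg_left (h.exp_VK (by linarith) hx)
        exact (div_pos_of_neg_of_neg (by norm_num) hα).le
  · exact h.Vcont.mul ((continuous_const.mul h.Vcont).add (continuous_const.mul h.Wcont)).rexp
  · intro x; rw [h.hVsym, h.hWsym]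

lemma Setup.int_W_exp (h : Setup V W) {c D : ℝ} (hc : 0 < c) (hD : 0 ≤ D)
    (hWV : ∀ x, W x ≤ V x / c + D) {α β : ℝ} (hα : α < 0) (hβ : β ≤ 0) :
    Integrable (fun x => W x * Real.exp (α * V x + β * W x)) := by
  have hV1 := h.V1pos
  have hk : 0 < -(α / 2 * V 1) := by nlinarith
  have hC2 : (0:ℝ) ≤ -2/α := (div_pos_of_neg_of_neg (by norm_num) hα).le
  apply integrable_of_even_bound (C := (1/c) * (-2/α) + D) (k := -(α / 2 * V 1)) ?_ ?_ hk
  · intro x hx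
    have hfx : 0 ≤ W x * Real.exp (α * V x + β * W x) :=
      mul_nonneg (h.hWnonneg x) (Real.exp_pos _).le
    rw [Real.norm_eq_abs, abs_of_nonneg hfx, neg_neg]
    have hstep : W x * Real.exp (α * V x + β * W x) ≤
        (V x / c + D) * Real.exp (α * V x) := by
      calc W x * Real.exp (α * V x + β * W x) ≤ W x * Real.exp (α * V x) :=
            mul_le_mul_of_nonneg_left (h.exp_add_le hβ x) (h.hWnonneg x)
      _ ≤ (V x / c + D) * Real.exp (α * V x) :=
            mul_le_mul_of_nonneg_right (hWV x) (Real.exp_pos _).le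
    have h2 : (V x / c + D) * Real.exp (α * V x) =
        (1/c) * (V x * Real.exp (α * V x)) + D * Real.exp (α * V x) := by ring
    have h3 : V x * Real.exp (α * V x) ≤ (-2/α) * Real.exp ((α/2) * V x) :=
      self_mul_exp_le hα (h.hVnonneg x)
    have h4 : Real.exp (α * V x) ≤ Real.exp ((α/2) * V x) := by
      apply Real.exp_le_exp.mpr
      nlinarith [h.hVnonneg x]
    have h5 : Real.exp ((α/2) * V x) ≤ Real.exp (α / 2 * V 1 * x) :=
      h.exp_VK (by linarith) hx
    have h6 : (0:ℝ) < Real.exp ((α/2) * V x) := Real.exp_pos _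
    calc W x * Real.exp (α * V x + β * W x) ≤
        (1/c) * (V x * Real.exp (α * V x)) + D * Real.exp (α * V x) := by
          rw [← h2]; exact hstep
    _ ≤ (1/c) * ((-2/α) * Real.exp ((α/2) * V x)) + D * Real.exp ((α/2) * V x) := by
          have := mul_le_mul_of_nonneg_left h3 (by positivity : (0:ℝ) ≤ 1/c)
          have := mul_le_mul_of_nonneg_left h4 hD
          linarith
    _ = ((1/c) * (-2/α) + D) * Real.exp ((α/2) * V x) := by ring
    _ ≤ ((1/c) * (-2/α) + D) * Real.exp (α / 2 * V 1 * x) := by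
          apply mul_le_mul_of_nonneg_left h5
          positivity
  · exact h.Wcont.mul ((continuous_const.mul h.Vcont).add (continuous_const.mul h.Wcont)).rexp
  · intro x; rw [h.hVsym, h.hWsym]

lemma Setup.int_pos (h : Setup V W) {α β : ℝ} (hα : α < 0) (hβ : β ≤ 0) :
    0 < ∫ x, Real.exp (α * V x + β * W x) := by
  rw [integral_pos_iff_support_of_nonneg (fun x => (Real.exp_pos _).le) (h.int_exp hα hβ)]
  have hsupp : Function.support (fun x : ℝ => Real.exp (α * V x + β * W x)) = Set.univ := by
    apply Set.eq_univ_iff_forall.mpr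
    intro x
    exact Real.exp_ne_zero _
  rw [hsupp]
  simp

end integrab

noncomputable def I0 (V W : ℝ → ℝ) (α β : ℝ) : ℝ := ∫ x, Real.exp (α * V x + β * W x)
noncomputable def I1 (V W : ℝ → ℝ) (α β : ℝ) : ℝ := ∫ x, V x * Real.exp (α * V x + β * W x)
noncomputable def I2 (V W : ℝ → ℝ) (α β : ℝ) : ℝ := ∫ x, W x * Real.exp (α * V x + β * W x)
noncomputable def EV (V W : ℝ → ℝ) (α β : ℝ) : ℝ := I1 V W α β / I0 V W α β
noncomputable def EW (V W : ℝ → ℝ) (α β : ℝ) : ℝ := I2 V W α β / I0 V W α β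

lemma exp_sub_one_mul_nonneg (t : ℝ) : 0 ≤ (Real.exp t - 1) * t := by
  rcases le_or_gt 0 t with ht | ht
  · have : (1:ℝ) ≤ Real.exp t := Real.one_le_exp ht
    nlinarith
  · have : Real.exp t < 1 := by
      rw [← Real.exp_zero]
      exact Real.exp_lt_exp.mpr ht
    nlinarith

lemma exp_sub_one_mul_eq_zero {t : ℝ} (h : (Real.exp t - 1) * t = 0) : t = 0 := by
  by_contra ht
  rcases lt_or_gt_of_ne ht with h1 | h1
  · have : Real.exp t < 1 := by
      rw [← Real.exp_zero]; exact Real.exp_lt_exp.mpr h1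
    nlinarith
  · have : (1:ℝ) < Real.exp t := by
      rw [← Real.exp_zero]; exact Real.exp_lt_exp.mpr h1
    nlinarith

section key
variable {V W : ℝ → ℝ}

lemma Setup.key (h : Setup V W) {c D : ℝ} (hc : 0 < c) (hD : 0 ≤ D)
    (hWV : ∀ x, W x ≤ V x / c + D)
    {a1 b1 a2 b2 : ℝ} (ha1 : a1 < 0) (hb1 : b1 ≤ 0) (ha2 : a2 < 0) (hb2 : b2 ≤ 0) :
    0 ≤ (a1 - a2) * (EV V W a1 b1 - EV V W a2 b2) +
        (b1 - b2) * (EW V W a1 b1 - EW V W a2 b2) ∧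
    ((a1 - a2) * (EV V W a1 b1 - EV V W a2 b2) +
        (b1 - b2) * (EW V W a1 b1 - EW V W a2 b2) = 0 → a1 = a2 ∧ b1 = b2) := by
  have hZ1 : 0 < I0 V W a1 b1 := h.int_pos ha1 hb1
  have hZ2 : 0 < I0 V W a2 b2 := h.int_pos ha2 hb2
  set Z1 := I0 V W a1 b1
  set Z2 := I0 V W a2 b2
  set L : ℝ := Real.log (Z1 / Z2) with hL
  set u : ℝ → ℝ := fun x => (a1 - a2) * V x + (b1 - b2) * W x - L with hu
  set p1 : ℝ → ℝ := fun x => Real.exp (a1 * V x + b1 * W x) / Z1 with hp1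
  set p2 : ℝ → ℝ := fun x => Real.exp (a2 * V x + b2 * W x) / Z2 with hp2
  have hpu : ∀ x, p1 x = p2 x * Real.exp (u x) := by
    intro x
    have hexpL : Real.exp L = Z1 / Z2 := Real.exp_log (by positivity)
    rw [hp1, hp2, hu]
    simp only []
    rw [div_mul_eq_mul_div, ← Real.exp_add]
    have harg : a2 * V x + b2 * W x + ((a1 - a2) * V x + (b1 - b2) * W x - L)
        = (a1 * V x + b1 * W x) - L := by ring
    rw [harg, Real.exp_sub, hexpL]
    field_simp
  -- nonnegativity of the integrand
  have hnn : ∀ x, 0 ≤ (p1 x - p2 x) * u x := by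
    intro x
    rw [hpu x]
    have : p2 x * Real.exp (u x) - p2 x = p2 x * (Real.exp (u x) - 1) := by ring
    rw [this, mul_assoc]
    exact mul_nonneg (by positivity) (exp_sub_one_mul_nonneg (u x))
  -- integrability of p_i * u
  have hint : ∀ a b : ℝ, a < 0 → b ≤ 0 →
      Integrable (fun x => Real.exp (a * V x + b * W x) * u x) := by
    intro a b ha hb
    have heq : (fun x => Real.exp (a * V x + b * W x) * u x) =
        fun x => (a1 - a2) * (V x * Real.exp (a * V x + b * W x)) +
          (b1 - b2) * (W x * Real.exp (a * V x + b * W x)) -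
          L * Real.exp (a * V x + b * W x) := by
      funext x; rw [hu]; ring
    rw [heq]
    exact (((h.int_V_exp ha hb).const_mul _).add
      ((h.int_W_exp hc hD hWV ha hb).const_mul _)).sub ((h.int_exp ha hb).const_mul _)
  have hint1 : Integrable (fun x => p1 x * u x) := by
    have heq : (fun x => p1 x * u x) =
        fun x => (1 / Z1) * (Real.exp (a1 * V x + b1 * W x) * u x) := by
      funext x; rw [hp1]; ring
    rw [heq]
    exact (hint a1 b1 ha1 hb1).const_mul _
  have hint2 : Integrable (fun x => p2 x * u x) := by
    have heq : (fun x => p2 x * u x) =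
        fun x => (1 / Z2) * (Real.exp (a2 * V x + b2 * W x) * u x) := by
      funext x; rw [hp2]; ring
    rw [heq]
    exact (hint a2 b2 ha2 hb2).const_mul _
  -- value of the integrals
  have hval : ∀ a b : ℝ, (ha : a < 0) → (hb : b ≤ 0) →
      ∫ x, Real.exp (a * V x + b * W x) * u x =
        (a1 - a2) * I1 V W a b + (b1 - b2) * I2 V W a b - L * I0 V W a b := by
    intro a b ha hb
    have heq : (fun x => Real.exp (a * V x + b * W x) * u x) =
        fun x => (a1 - a2) * (V x * Real.exp (a * V x + b * W x)) +
          (b1 - b2) * (W x * Real.exp (a * V x + b * W x)) -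
          L * Real.exp (a * V x + b * W x) := by
      funext x; rw [hu]; ring
    rw [heq, integral_sub, integral_add, integral_const_mul, integral_const_mul,
      integral_const_mul]
    · rfl
    · exact (h.int_V_exp ha hb).const_mul _
    · exact (h.int_W_exp hc hD hWV ha hb).const_mul _
    · exact (((h.int_V_exp ha hb).const_mul _).add
        ((h.int_W_exp hc hD hWV ha hb).const_mul _))
    · exact (h.int_exp ha hb).const_mul _
  have hItot : ∫ x, (p1 x - p2 x) * u x =
      (a1 - a2) * (EV V W a1 b1 - EV V W a2 b2) +
        (b1 - b2) * (EW V W a1 b1 - EW V W a2 b2) := by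
    have heq : (fun x => (p1 x - p2 x) * u x) =
        fun x => (1 / Z1) * (Real.exp (a1 * V x + b1 * W x) * u x) -
          (1 / Z2) * (Real.exp (a2 * V x + b2 * W x) * u x) := by
      funext x; rw [hp1, hp2]; ring
    rw [heq, integral_sub (((hint a1 b1 ha1 hb1).const_mul _))
      (((hint a2 b2 ha2 hb2).const_mul _)), integral_const_mul, integral_const_mul,
      hval a1 b1 ha1 hb1, hval a2 b2 ha2 hb2]
    rw [EV, EV, EW, EW]
    have hZ1' : I0 V W a1 b1 ≠ 0 := hZ1.ne'
    have hZ2' : I0 V W a2 b2 ≠ 0 := hZ2.ne'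
    simp only [Z1, Z2]
    field_simp
    ring
  have hSnn : 0 ≤ (a1 - a2) * (EV V W a1 b1 - EV V W a2 b2) +
      (b1 - b2) * (EW V W a1 b1 - EW V W a2 b2) := by
    rw [← hItot]
    exact integral_nonneg hnn
  refine ⟨hSnn, fun hS0 => ?_⟩
  -- equality case
  have hint12 : Integrable (fun x => (p1 x - p2 x) * u x) := by
    have heq : (fun x => (p1 x - p2 x) * u x) =
        fun x => p1 x * u x - p2 x * u x := by funext x; ring
    rw [heq]; exact hint1.sub hint2
  have hae : (fun x => (p1 x - p2 x) * u x) =ᵐ[volume] 0 := by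
    rw [← integral_eq_zero_iff_of_nonneg hnn hint12]
    rw [hItot]
    exact hS0
  have huae : u =ᵐ[volume] 0 := by
    filter_upwards [hae] with x hx
    simp only [Pi.zero_apply] at hx ⊢
    rw [hpu x] at hx
    have h1 : p2 x * ((Real.exp (u x) - 1) * u x) = 0 := by
      rw [← hx]; ring
    have hp2pos : 0 < p2 x := by rw [hp2]; positivity
    have h2 : (Real.exp (u x) - 1) * u x = 0 := by
      rcases mul_eq_zero.mp h1 with h | h
      · exact absurd h hp2pos.ne'
      · exact h
    exact exp_sub_one_mul_eq_zero h2
  have hucont : Continuous u := by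
    rw [hu]
    exact ((continuous_const.mul h.Vcont).add (continuous_const.mul h.Wcont)).sub
      continuous_const
  have huzero : ∀ x, u x = 0 := by
    have := (Continuous.ae_eq_iff_eq volume hucont continuous_const).mp huae
    intro x; rw [this]; rfl
  have hL0 : L = 0 := by
    have h0 := huzero 0
    rw [hu] at h0
    simp only [] at h0
    rw [(h.hVzero 0).mpr rfl, (h.hWzero 0).mpr rfl] at h0
    linarith [h0]
  have hlin : ∀ x, (a1 - a2) * V x + (b1 - b2) * W x = 0 := by
    intro x
    have := huzero x
    rw [hu] at this
    simp only [] at this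
    rw [hL0] at this
    linarith
  obtain ⟨h1, h2⟩ := h.hli _ _ hlin
  constructor <;> linarith

end key

section cors
variable {V W : ℝ → ℝ}

lemma Setup.EV_strict_mono (h : Setup V W) {c D : ℝ} (hc : 0 < c) (hD : 0 ≤ D)
    (hWV : ∀ x, W x ≤ V x / c + D) {a1 a2 b : ℝ} (ha1 : a1 < 0) (ha2 : a2 < 0)
    (hb : b ≤ 0) (hlt : a1 < a2) : EV V W a1 b < EV V W a2 b := by
  obtain ⟨hS, heq⟩ := h.key hc hD hWV ha1 hb ha2 hb
  rcases lt_trichotomy (EV V W a1 b - EV V W a2 b) 0 with h1 | h1 | h1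
  · linarith
  · exfalso
    have : a1 = a2 := (heq (by rw [h1]; ring)).1
    linarith
  · exfalso; nlinarith

lemma Setup.EW_lt_of_EV_eq (h : Setup V W) {c D : ℝ} (hc : 0 < c) (hD : 0 ≤ D)
    (hWV : ∀ x, W x ≤ V x / c + D) {a b as : ℝ} (ha : a < 0) (hb : b < 0)
    (has : as < 0) (hEV : EV V W a b = EV V W as 0) :
    EW V W a b < EW V W as 0 := by
  obtain ⟨hS, heq⟩ := h.key hc hD hWV ha hb.le has le_rfl
  rw [hEV] at hS heq
  simp only [sub_self, mul_zero, zero_add, sub_zero] at hS heq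
  rcases lt_trichotomy (EW V W a b - EW V W as 0) 0 with h1 | h1 | h1
  · linarith
  · exfalso
    have : b = 0 := (heq (by rw [h1]; ring)).2
    linarith
  · exfalso; nlinarith

end cors

section continuity
variable {V W : ℝ → ℝ}

lemma Setup.cont_param (h : Setup V W) {f : ℝ → ℝ} (hfc : Continuous f)
    {ap : ℝ} (hap : ap < 0)
    (hfi : Integrable (fun x => |f x| * Real.exp (ap * V x))) :
    ContinuousOn (fun p : ℝ × ℝ => ∫ x, f x * Real.exp (p.1 * V x + p.2 * W x))
      (Set.Iic ap ×ˢ Set.Iic (0:ℝ)) := by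
  intro p₀ hp₀
  set s := Set.Iic ap ×ˢ Set.Iic (0:ℝ) with hs
  unfold ContinuousWithinAt
  apply tendsto_integral_filter_of_dominated_convergence
    (bound := fun x => |f x| * Real.exp (ap * V x))
  · apply Filter.Eventually.of_forall
    intro p
    exact (hfc.mul ((continuous_const.mul h.Vcont).add
      (continuous_const.mul h.Wcont)).rexp).aestronglyMeasurable
  · apply eventually_nhdsWithin_of_forall
    intro p hp
    apply Filter.Eventually.of_forall
    intro x
    rw [norm_mul, Real.norm_eq_abs, Real.norm_eq_abs, abs_of_pos (Real.exp_pos _)]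
    apply mul_le_mul_of_nonneg_left _ (abs_nonneg _)
    apply Real.exp_le_exp.mpr
    have h1 : p.1 * V x ≤ ap * V x :=
      mul_le_mul_of_nonneg_right hp.1 (h.hVnonneg x)
    have h2 : p.2 * W x ≤ 0 :=
      mul_nonpos_of_nonpos_of_nonneg hp.2 (h.hWnonneg x)
    linarith
  · exact hfi
  · apply Filter.Eventually.of_forall
    intro x
    apply Filter.Tendsto.mono_left _ nhdsWithin_le_nhds
    exact (Continuous.tendsto (by fun_prop) p₀)

lemma Setup.contI0 (h : Setup V W) {ap : ℝ} (hap : ap < 0) :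
    ContinuousOn (fun p : ℝ × ℝ => I0 V W p.1 p.2) (Set.Iic ap ×ˢ Set.Iic (0:ℝ)) := by
  have := h.cont_param continuous_const (f := fun _ => (1:ℝ)) hap ?_
  · convert this using 2 with p
    rw [I0]
    congr 1
    funext x
    rw [one_mul]
  · have := h.int_exp hap le_rfl (β := 0)
    apply this.congr' ?_ ?_
    · exact (continuous_const.mul ((continuous_const.mul h.Vcont).rexp) :
          Continuous fun x : ℝ => |(1:ℝ)| * Real.exp (ap * V x)).aestronglyMeasurable
    · apply Filter.Eventually.of_forall
      intro x
      simp

lemma Setup.contI1 (h : Setup V W) {ap : ℝ} (hap : ap < 0) :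
    ContinuousOn (fun p : ℝ × ℝ => I1 V W p.1 p.2) (Set.Iic ap ×ˢ Set.Iic (0:ℝ)) := by
  have := h.cont_param h.Vcont hap ?_
  · exact this
  · have := h.int_V_exp hap le_rfl (β := 0)
    apply this.congr' ?_ ?_
    · exact (h.Vcont.abs.mul ((continuous_const.mul h.Vcont).rexp)).aestronglyMeasurable
    · apply Filter.Eventually.of_forall
      intro x
      simp [abs_of_nonneg (h.hVnonneg x)]

lemma Setup.contI2 (h : Setup V W) {c D : ℝ} (hc : 0 < c) (hD : 0 ≤ D)
    (hWV : ∀ x, W x ≤ V x / c + D) {ap : ℝ} (hap : ap < 0) :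
    ContinuousOn (fun p : ℝ × ℝ => I2 V W p.1 p.2) (Set.Iic ap ×ˢ Set.Iic (0:ℝ)) := by
  have := h.cont_param h.Wcont hap ?_
  · exact this
  · have := h.int_W_exp hc hD hWV hap le_rfl (β := 0)
    apply this.congr' ?_ ?_
    · exact (h.Wcont.abs.mul ((continuous_const.mul h.Vcont).rexp)).aestronglyMeasurable
    · apply Filter.Eventually.of_forall
      intro x
      simp [abs_of_nonneg (h.hWnonneg x)]

lemma Setup.contEV (h : Setup V W) {ap : ℝ} (hap : ap < 0) :
    ContinuousOn (fun p : ℝ × ℝ => EV V W p.1 p.2) (Set.Iic ap ×ˢ Set.Iic (0:ℝ)) := by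
  apply (h.contI1 hap).div (h.contI0 hap)
  intro p hp
  exact (h.int_pos (lt_of_le_of_lt hp.1 hap) hp.2).ne'

lemma Setup.contEW (h : Setup V W) {c D : ℝ} (hc : 0 < c) (hD : 0 ≤ D)
    (hWV : ∀ x, W x ≤ V x / c + D) {ap : ℝ} (hap : ap < 0) :
    ContinuousOn (fun p : ℝ × ℝ => EW V W p.1 p.2) (Set.Iic ap ×ˢ Set.Iic (0:ℝ)) := by
  apply (h.contI2 hc hD hWV hap).div (h.contI0 hap)
  intro p hp
  exact (h.int_pos (lt_of_le_of_lt hp.1 hap) hp.2).ne'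

end continuity

section limits
variable {V W : ℝ → ℝ}

lemma Setup.I1_nonneg (h : Setup V W) (a b : ℝ) : 0 ≤ I1 V W a b :=
  integral_nonneg fun x => mul_nonneg (h.hVnonneg x) (Real.exp_pos _).le

lemma Setup.EV_unif_small (h : Setup V W) {R : ℝ} (hR : 0 < R) {b0 : ℝ} (hb0 : b0 ≤ 0) :
    ∃ A : ℝ, A < 0 ∧ ∀ a b : ℝ, a ≤ A → b0 ≤ b → b ≤ 0 → EV V W a b < R := by
  -- choose δ
  obtain ⟨δ0, hδ0pos, hδ0⟩ := Metric.continuousAt_iff.mp h.Vcont.continuousAt R hR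
  set δ : ℝ := min (δ0 / 2) 1 with hδdef
  have hδpos : 0 < δ := lt_min (by linarith) one_pos
  have hδ1 : δ ≤ 1 := min_le_right _ _
  have hVδR : V δ < R := by
    have hd : dist δ 0 < δ0 := by
      rw [Real.dist_eq, sub_zero, abs_of_pos hδpos]
      calc δ ≤ δ0 / 2 := min_le_left _ _
      _ < δ0 := by linarith
    have := hδ0 hd
    rw [Real.dist_eq, (h.hVzero 0).mpr rfl, sub_zero] at this
    calc V δ ≤ |V δ| := le_abs_self _
    _ < R := this
  set v : ℝ := V δ with hvdef
  set ε' : ℝ := V (δ / 2) with hε'def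
  have hε'v : ε' < v :=
    strict_mono_nonneg h.hVsym h.hVconv h.hVzero h.hVnonneg (by linarith) (by linarith)
  have hε'0 : 0 ≤ ε' := h.hVnonneg _
  -- reference integrable function
  have hKint : Integrable (fun x => V x * Real.exp (-V x)) := by
    have := h.int_V_exp (by norm_num : (-1:ℝ) < 0) (le_refl (0:ℝ))
    apply this.congr' ?_ ?_
    · exact (h.Vcont.mul (h.Vcont.neg.rexp)).aestronglyMeasurable
    · exact Filter.Eventually.of_forall fun x => by
        norm_num
  set K : ℝ := ∫ x, V x * Real.exp (-V x) with hKdef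
  have hK0 : 0 ≤ K :=
    integral_nonneg fun x => mul_nonneg (h.hVnonneg x) (Real.exp_pos _).le
  -- the vanishing tail function
  set C : ℝ := K / δ with hCdef
  have hC0 : 0 ≤ C := div_nonneg hK0 hδpos.le
  have htend : Filter.Tendsto (fun a : ℝ => C * Real.exp (a * (v - ε') + (v - b0 * W 1)))
      Filter.atBot (nhds 0) := by
    rw [show (0:ℝ) = C * 0 by ring]
    apply Filter.Tendsto.const_mul
    apply Real.tendsto_exp_atBot.comp
    apply Filter.tendsto_atBot_add_const_right
    exact Filter.tendsto_id.atBot_mul_const (by linarith)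
  have hev : ∀ᶠ a in Filter.atBot,
      C * Real.exp (a * (v - ε') + (v - b0 * W 1)) < R - v := by
    have : Set.Iio (R - v) ∈ nhds (0:ℝ) := Iio_mem_nhds (by linarith)
    exact htend.eventually this
  obtain ⟨A0, hA0⟩ := Filter.eventually_atBot.mp hev
  refine ⟨min A0 (-1), lt_of_le_of_lt (min_le_right _ _) (by norm_num), ?_⟩
  intro a b haA hb0b hb
  have ha1 : a ≤ -1 := le_trans haA (min_le_right _ _)
  have ha : a < 0 := lt_of_le_of_lt ha1 (by norm_num)
  have hZpos : 0 < I0 V W a b := h.int_pos ha hb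
  -- denominator lower bound
  have hden : δ * Real.exp (a * ε' + b0 * W 1) ≤ I0 V W a b := by
    have hsub : ∫ x in Set.Icc (-(δ/2)) (δ/2), Real.exp (a * V x + b * W x) ≤ I0 V W a b :=
      setIntegral_le_integral (h.int_exp ha hb)
        (Filter.Eventually.of_forall fun x => (Real.exp_pos _).le)
    have hconst : ∫ x in Set.Icc (-(δ/2)) (δ/2),
        Real.exp (a * ε' + b0 * W 1) ≤
        ∫ x in Set.Icc (-(δ/2)) (δ/2), Real.exp (a * V x + b * W x) := by
      apply setIntegral_mono_on
      · exact integrableOn_const (by rw [Real.volume_Icc]; exact ENNReal.ofReal_ne_top)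
      · exact (h.int_exp ha hb).integrableOn
      · exact measurableSet_Icc
      · intro x hx
        apply Real.exp_le_exp.mpr
        have haxd : |x| ≤ δ / 2 := abs_le.mpr ⟨hx.1, hx.2⟩
        have hVx : V x ≤ ε' := by
          rw [← abs_eq h.hVsym x]
          exact mono_nonneg h.hVsym h.hVconv (abs_nonneg x) haxd
        have hWx : W x ≤ W 1 := by
          rw [← abs_eq h.hWsym x]
          exact mono_nonneg h.hWsym h.hWconv (abs_nonneg x) (by linarith)
        have h1 : a * V x ≥ a * ε' := mul_le_mul_of_nonpos_left hVx ha.le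
        have h2 : b0 * W 1 ≤ b * W x := by
          calc b0 * W 1 ≤ b0 * W x := mul_le_mul_of_nonpos_left hWx hb0
          _ ≤ b * W x := mul_le_mul_of_nonneg_right hb0b (h.hWnonneg x)
        linarith
    have hcval : ∫ x in Set.Icc (-(δ/2)) (δ/2), Real.exp (a * ε' + b0 * W 1)
        = δ * Real.exp (a * ε' + b0 * W 1) := by
      rw [setIntegral_const, Real.volume_real_Icc_of_le (by linarith), smul_eq_mul]
      congr 1
      ring
    linarith [hcval ▸ hconst, hsub]
  -- numerator upper bound
  have hnum : I1 V W a b ≤ v * I0 V W a b + Real.exp ((a + 1) * v) * K := by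
    have hsplit : I1 V W a b = (∫ x in Set.Icc (-δ) δ, V x * Real.exp (a * V x + b * W x)) +
        ∫ x in (Set.Icc (-δ) δ)ᶜ, V x * Real.exp (a * V x + b * W x) := by
      rw [I1, ← integral_add_compl measurableSet_Icc (h.int_V_exp ha hb)]
    have hinner : ∫ x in Set.Icc (-δ) δ, V x * Real.exp (a * V x + b * W x) ≤
        v * I0 V W a b := by
      have h1 : ∫ x in Set.Icc (-δ) δ, V x * Real.exp (a * V x + b * W x) ≤
          ∫ x in Set.Icc (-δ) δ, v * Real.exp (a * V x + b * W x) := by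
        apply setIntegral_mono_on (h.int_V_exp ha hb).integrableOn
          ((h.int_exp ha hb).const_mul v).integrableOn measurableSet_Icc
        intro x hx
        have : V x ≤ v := by
          rw [← abs_eq h.hVsym x]
          exact mono_nonneg h.hVsym h.hVconv (abs_nonneg x) (abs_le.mpr ⟨hx.1, hx.2⟩)
        exact mul_le_mul_of_nonneg_right this (Real.exp_pos _).le
      have h2 : ∫ x in Set.Icc (-δ) δ, v * Real.exp (a * V x + b * W x) ≤
          v * I0 V W a b := by
        rw [integral_const_mul]
        apply mul_le_mul_of_nonneg_left _ (by linarith : (0:ℝ) ≤ v)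
        exact setIntegral_le_integral (h.int_exp ha hb)
          (Filter.Eventually.of_forall fun x => (Real.exp_pos _).le)
      linarith
    have houter : ∫ x in (Set.Icc (-δ) δ)ᶜ, V x * Real.exp (a * V x + b * W x) ≤
        Real.exp ((a + 1) * v) * K := by
      have h1 : ∫ x in (Set.Icc (-δ) δ)ᶜ, V x * Real.exp (a * V x + b * W x) ≤
          ∫ x in (Set.Icc (-δ) δ)ᶜ, Real.exp ((a + 1) * v) * (V x * Real.exp (-V x)) := by
        apply setIntegral_mono_on (h.int_V_exp ha hb).integrableOn
          (hKint.const_mul _).integrableOn measurableSet_Icc.compl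
        intro x hx
        rw [Set.mem_compl_iff, Set.mem_Icc, not_and_or] at hx
        have hxout : δ ≤ |x| := by
          rcases hx with hx | hx
          · push_neg at hx
            rw [abs_of_neg (by linarith)]; linarith
          · push_neg at hx
            rw [abs_of_pos (by linarith)]; linarith
        have hVxv : v ≤ V x := by
          rw [← abs_eq h.hVsym x]
          exact mono_nonneg h.hVsym h.hVconv (by linarith) hxout
        have hkey : a * V x + b * W x ≤ (a + 1) * v + (-V x) := by
          have hb' : b * W x ≤ 0 := mul_nonpos_of_nonpos_of_nonneg hb (h.hWnonneg x)
          have : (a + 1) * V x ≤ (a + 1) * v :=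
            mul_le_mul_of_nonpos_left hVxv (by linarith)
          linarith
        calc V x * Real.exp (a * V x + b * W x) ≤
            V x * Real.exp ((a + 1) * v + (-V x)) :=
              mul_le_mul_of_nonneg_left (Real.exp_le_exp.mpr hkey) (h.hVnonneg x)
        _ = Real.exp ((a + 1) * v) * (V x * Real.exp (-V x)) := by
            rw [Real.exp_add]; ring
      have h2 : ∫ x in (Set.Icc (-δ) δ)ᶜ, Real.exp ((a + 1) * v) * (V x * Real.exp (-V x)) ≤
          Real.exp ((a + 1) * v) * K := by
        rw [integral_const_mul]
        apply mul_le_mul_of_nonneg_left _ (Real.exp_pos _).le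
        exact setIntegral_le_integral hKint
          (Filter.Eventually.of_forall fun x =>
            mul_nonneg (h.hVnonneg x) (Real.exp_pos _).le)
      linarith
    linarith
  -- conclusion
  set T : ℝ := Real.exp ((a + 1) * v) * K with hTdef
  have hT0 : 0 ≤ T := mul_nonneg (Real.exp_pos _).le hK0
  set dlb : ℝ := δ * Real.exp (a * ε' + b0 * W 1) with hdlbdef
  have hdlb0 : 0 < dlb := by positivity
  have e1 : EV V W a b ≤ (v * I0 V W a b + T) / I0 V W a b := by
    rw [EV]
    exact (div_le_div_iff_of_pos_right hZpos).mpr hnum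
  have e2 : (v * I0 V W a b + T) / I0 V W a b = v + T / I0 V W a b := by
    field_simp
  have e3 : T / I0 V W a b ≤ T / dlb := div_le_div_of_nonneg_left hT0 hdlb0 hden
  have e4 : T / dlb = C * Real.exp (a * (v - ε') + (v - b0 * W 1)) := by
    rw [hTdef, hdlbdef, hCdef, div_mul_eq_mul_div]
    rw [div_eq_div_iff (by positivity) (by positivity)]
    have expand : Real.exp ((a + 1) * v) * K * δ =
        K * δ * Real.exp ((a + 1) * v) := by ring
    have expand2 : K * Real.exp (a * (v - ε') + (v - b0 * W 1)) *
        (δ * Real.exp (a * ε' + b0 * W 1)) =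
        K * δ * (Real.exp (a * (v - ε') + (v - b0 * W 1)) * Real.exp (a * ε' + b0 * W 1)) := by
      ring
    rw [expand, expand2, ← Real.exp_add]
    congr 2
    ring
  have e5 : C * Real.exp (a * (v - ε') + (v - b0 * W 1)) < R - v := hA0 a (le_trans haA (min_le_left _ _))
  calc EV V W a b ≤ v + T / I0 V W a b := by rw [← e2]; exact e1
  _ ≤ v + T / dlb := by linarith
  _ = v + C * Real.exp (a * (v - ε') + (v - b0 * W 1)) := by rw [e4]
  _ < R := by linarith

end limits

section slices
variable {V W : ℝ → ℝ}

lemma Setup.contEV_a (h : Setup V W) {ap : ℝ} (hap : ap < 0) {b : ℝ} (hb : b ≤ 0) :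
    ContinuousOn (fun a => EV V W a b) (Set.Iic ap) := by
  have hcomp := (h.contEV hap).comp
    ((continuous_id.prodMk continuous_const).continuousOn :
      ContinuousOn (fun a : ℝ => (a, b)) (Set.Iic ap))
    (fun a ha => Set.mk_mem_prod ha (Set.mem_Iic.mpr hb))
  exact hcomp

lemma Setup.contEV_b (h : Setup V W) {ap : ℝ} (hap : ap < 0) {a : ℝ} (ha : a ≤ ap) :
    ContinuousOn (fun b => EV V W a b) (Set.Iic (0:ℝ)) := by
  have hcomp := (h.contEV hap).comp
    ((continuous_const.prodMk continuous_id).continuousOn :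
      ContinuousOn (fun b : ℝ => (a, b)) (Set.Iic (0:ℝ)))
    (fun b hb => Set.mk_mem_prod (Set.mem_Iic.mpr ha) hb)
  exact hcomp

end slices

theorem gradient_surjectivity_below_m'
    (V W : ℝ → ℝ) (h : Setup V W)
    (R : ℝ) (hR : 0 < R)
    (αs : ℝ) (hαs : αs < 0)
    (hEVs : EV V W αs 0 = R) (m : ℝ) (hEWs : EW V W αs 0 = m) :
    ∃ ε > (0 : ℝ), ∀ t ∈ Set.Ioo (m - ε) m, ∃ α β : ℝ,
      α < 0 ∧ β < 0 ∧
      Integrable (fun x => Real.exp (α * V x + β * W x)) ∧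
      EV V W α β = R ∧ EW V W α β = t := by
  classical
  obtain ⟨c, hc, D, hD, hWV⟩ := h.Wbound
  set ap : ℝ := αs / 2 with hapdef
  have hap : ap < 0 := by rw [hapdef]; linarith
  have hαsap : αs < ap := by rw [hapdef]; linarith
  have hEVap : R < EV V W ap 0 := by
    rw [← hEVs]
    exact h.EV_strict_mono hc hD hWV hαs hap le_rfl hαsap
  -- find β₂ such that EV ap b > R for b ∈ Ioc β₂ 0
  have hslb : ContinuousOn (fun b => EV V W ap b) (Set.Iic (0:ℝ)) := h.contEV_b hap le_rfl
  have htend0 : Filter.Tendsto (fun b => EV V W ap b) (nhdsWithin 0 (Set.Iic (0:ℝ)))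
      (nhds (EV V W ap 0)) := hslb 0 (Set.mem_Iic.mpr le_rfl)
  have hev2 : ∀ᶠ b in nhdsWithin 0 (Set.Iic (0:ℝ)), R < EV V W ap b :=
    htend0.eventually (eventually_gt_nhds hEVap)
  obtain ⟨β₂, hβ₂mem, hβ₂sub⟩ := mem_nhdsLE_iff_exists_Ioc_subset.mp hev2
  have hβ₂ : β₂ < 0 := hβ₂mem
  -- uniform lower bound A for the α-parameter
  obtain ⟨A, hA, hAsmall⟩ := h.EV_unif_small hR (b0 := β₂) hβ₂.le
  set A' : ℝ := min A (ap - 1) with hA'def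
  have hA'0 : A' < 0 := lt_of_le_of_lt (min_le_right _ _) (by linarith)
  have hA'ap : A' < ap := lt_of_le_of_lt (min_le_right _ _) (by linarith)
  have hA'A : A' ≤ A := min_le_left _ _
  -- existence of the implicit function
  have hex : ∀ b ∈ Set.Ioc β₂ 0, ∃ a, a ∈ Set.Ioo A' ap ∧ EV V W a b = R := by
    intro b hb
    have h1 : EV V W A' b < R := hAsmall A' b hA'A hb.1.le hb.2
    have h2 : R < EV V W ap b := hβ₂sub hb
    have hcs : ContinuousOn (fun a => EV V W a b) (Set.Icc A' ap) :=
      (h.contEV_a hap hb.2).mono (fun x hx => Set.mem_Iic.mpr hx.2)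
    have := intermediate_value_Ioo hA'ap.le hcs (Set.mem_Ioo.mpr ⟨h1, h2⟩)
    obtain ⟨a, ha1, ha2⟩ := this
    exact ⟨a, ha1, ha2⟩
  have hex' : ∀ b : ℝ, ∃ a : ℝ, b ∈ Set.Ioc β₂ 0 → (a ∈ Set.Ioo A' ap ∧ EV V W a b = R) := by
    intro b
    by_cases hb : b ∈ Set.Ioc β₂ 0
    · obtain ⟨a, ha1, ha2⟩ := hex b hb
      exact ⟨a, fun _ => ⟨ha1, ha2⟩⟩
    · exact ⟨0, fun hb' => absurd hb' hb⟩
  set αf : ℝ → ℝ := fun b => (hex' b).choose with hαfdef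
  have hαf : ∀ b ∈ Set.Ioc β₂ 0, αf b ∈ Set.Ioo A' ap ∧ EV V W (αf b) b = R :=
    fun b hb => (hex' b).choose_spec hb
  -- uniqueness
  have huniq : ∀ b ≤ (0:ℝ), ∀ a1 a2 : ℝ, a1 < 0 → a2 < 0 →
      EV V W a1 b = R → EV V W a2 b = R → a1 = a2 := by
    intro b hb a1 a2 ha1 ha2 he1 he2
    rcases lt_trichotomy a1 a2 with hlt | heq | hgt
    · have := h.EV_strict_mono hc hD hWV ha1 ha2 hb hlt
      rw [he1, he2] at this
      exact absurd this (lt_irrefl R)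
    · exact heq
    · have := h.EV_strict_mono hc hD hWV ha2 ha1 hb hgt
      rw [he1, he2] at this
      exact absurd this (lt_irrefl R)
  have h0mem : (0:ℝ) ∈ Set.Ioc β₂ 0 := Set.mem_Ioc.mpr ⟨hβ₂, le_rfl⟩
  have hαf0 : αf 0 = αs := by
    have h1 := hαf 0 h0mem
    exact huniq 0 le_rfl (αf 0) αs (lt_trans h1.1.2 hap) hαs h1.2 hEVs
  -- continuity of the implicit function
  have hαfcont : ContinuousOn αf (Set.Ioc β₂ 0) := by
    intro bs hbs
    have ha0 := hαf bs hbs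
    set as : ℝ := αf bs with hasdef
    apply Metric.tendsto_nhds.mpr
    intro ε hε
    set ε'' : ℝ := min (ε/2) (min ((as - A')/2) ((ap - as)/2)) with hε''def
    have hε''pos : 0 < ε'' := by
      apply lt_min (by linarith)
      apply lt_min
      · have := ha0.1.1; simp only [hasdef]; linarith [ha0.1.1]
      · linarith [ha0.1.2]
    have hεlt : ε'' < ε := lt_of_le_of_lt (min_le_left _ _) (by linarith)
    have hlow : A' < as - ε'' := by
      have h1 : ε'' ≤ (as - A')/2 := le_trans (min_le_right _ _) (min_le_left _ _)
      linarith [ha0.1.1]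
    have hhigh : as + ε'' < ap := by
      have h1 : ε'' ≤ (ap - as)/2 := le_trans (min_le_right _ _) (min_le_right _ _)
      linarith [ha0.1.2]
    have hasneg : as < 0 := lt_trans ha0.1.2 hap
    have hmlow : as - ε'' < 0 := by linarith
    have hmhigh : as + ε'' < 0 := lt_trans hhigh hap
    have h1 : EV V W (as - ε'') bs < R := by
      rw [← ha0.2]
      exact h.EV_strict_mono hc hD hWV hmlow hasneg hbs.2 (by linarith)
    have h2 : R < EV V W (as + ε'') bs := by
      rw [← ha0.2]
      exact h.EV_strict_mono hc hD hWV hasneg hmhigh hbs.2 (by linarith)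
    have hc1 : Filter.Tendsto (fun b => EV V W (as - ε'') b)
        (nhdsWithin bs (Set.Iic (0:ℝ))) (nhds (EV V W (as - ε'') bs)) :=
      h.contEV_b hap (by linarith : as - ε'' ≤ ap) bs (Set.mem_Iic.mpr hbs.2)
    have hc2 : Filter.Tendsto (fun b => EV V W (as + ε'') b)
        (nhdsWithin bs (Set.Iic (0:ℝ))) (nhds (EV V W (as + ε'') bs)) :=
      h.contEV_b hap hhigh.le bs (Set.mem_Iic.mpr hbs.2)
    have hev1 : ∀ᶠ b in nhdsWithin bs (Set.Iic (0:ℝ)), EV V W (as - ε'') b < R :=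
      hc1.eventually (eventually_lt_nhds h1)
    have hev2' : ∀ᶠ b in nhdsWithin bs (Set.Iic (0:ℝ)), R < EV V W (as + ε'') b :=
      hc2.eventually (eventually_gt_nhds h2)
    have hmono : nhdsWithin bs (Set.Ioc β₂ 0) ≤ nhdsWithin bs (Set.Iic (0:ℝ)) :=
      nhdsWithin_mono bs (fun x hx => Set.mem_Iic.mpr hx.2)
    filter_upwards [hmono hev1, hmono hev2', eventually_mem_nhdsWithin] with b hb1 hb2 hbmem
    have hb0 := hαf b hbmem
    have hL : as - ε'' < αf b := by
      by_contra hcon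
      push_neg at hcon
      rcases eq_or_lt_of_le hcon with he | hlt
      · rw [← he] at hb1
        exact absurd (hb0.2 ▸ hb1) (lt_irrefl R)
      · have := h.EV_strict_mono hc hD hWV (lt_trans hb0.1.2 hap) hmlow hbmem.2 hlt
        rw [hb0.2] at this
        linarith
    have hH : αf b < as + ε'' := by
      by_contra hcon
      push_neg at hcon
      rcases eq_or_lt_of_le hcon with he | hlt
      · rw [he] at hb2
        exact absurd (hb0.2 ▸ hb2) (lt_irrefl R)
      · have := h.EV_strict_mono hc hD hWV hmhigh (lt_trans hb0.1.2 hap) hbmem.2 hlt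
        rw [hb0.2] at this
        linarith
    rw [Real.dist_eq, abs_lt]
    constructor <;> [linarith; linarith]
  -- continuity of t
  set tf : ℝ → ℝ := fun b => EW V W (αf b) b with htfdef
  have htcont : ContinuousOn tf (Set.Ioc β₂ 0) := by
    intro bs hbs
    have hpair : ContinuousWithinAt (fun b => ((αf b, b) : ℝ × ℝ)) (Set.Ioc β₂ 0) bs :=
      (hαfcont bs hbs).prodMk (continuousWithinAt_id)
    have hmem : ((αf bs, bs) : ℝ × ℝ) ∈ Set.Iic ap ×ˢ Set.Iic (0:ℝ) :=
      Set.mk_mem_prod (Set.mem_Iic.mpr (hαf bs hbs).1.2.le) (Set.mem_Iic.mpr hbs.2)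
    have hmaps : Set.MapsTo (fun b => ((αf b, b) : ℝ × ℝ)) (Set.Ioc β₂ 0)
        (Set.Iic ap ×ˢ Set.Iic (0:ℝ)) := fun b hb =>
      Set.mk_mem_prod (Set.mem_Iic.mpr (hαf b hb).1.2.le) (Set.mem_Iic.mpr hb.2)
    have hcomp := ContinuousWithinAt.comp (g := fun p : ℝ × ℝ => EW V W p.1 p.2)
      (f := fun b => ((αf b, b) : ℝ × ℝ)) (x := bs)
      ((h.contEW hc hD hWV hap) _ hmem) hpair hmaps
    exact hcomp
  have ht0 : tf 0 = m := by
    rw [htfdef]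
    simp only []
    rw [hαf0, hEWs]
  set β₁ : ℝ := β₂ / 2 with hβ₁def
  have hβ₁neg : β₁ < 0 := by rw [hβ₁def]; linarith
  have hβ₁mem : β₁ ∈ Set.Ioc β₂ 0 := Set.mem_Ioc.mpr ⟨by rw [hβ₁def]; linarith, hβ₁neg.le⟩
  have htβ₁ : tf β₁ < m := by
    rw [htfdef, ← hEWs]
    have h1 := hαf β₁ hβ₁mem
    exact h.EW_lt_of_EV_eq hc hD hWV (lt_trans h1.1.2 hap) hβ₁neg hαs
      (h1.2.trans hEVs.symm)
  refine ⟨m - tf β₁, by linarith, ?_⟩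
  intro t' ht'
  have ht'mem : t' ∈ Set.Ioo (tf β₁) (tf 0) := by
    rw [ht0]
    constructor
    · have := ht'.1; linarith
    · exact ht'.2
  have hIccsub : Set.Icc β₁ (0:ℝ) ⊆ Set.Ioc β₂ 0 := by
    intro x hx
    exact Set.mem_Ioc.mpr ⟨lt_of_lt_of_le (by rw [hβ₁def]; linarith) hx.1, hx.2⟩
  have hivt := intermediate_value_Ioo hβ₁neg.le (htcont.mono hIccsub) ht'mem
  obtain ⟨b, hbmem, htb⟩ := hivt
  have hbs : b ∈ Set.Ioc β₂ 0 := hIccsub (Set.mem_Icc.mpr ⟨hbmem.1.le, hbmem.2.le⟩)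
  have hb0 := hαf b hbs
  refine ⟨αf b, b, lt_trans hb0.1.2 hap, hbmem.2, h.int_exp (lt_trans hb0.1.2 hap) hbmem.2.le,
    hb0.2, htb⟩

end GradSurj

open GradSurj in
theorem gradient_surjectivity_below_m
    (V W : ℝ → ℝ)
    (hVsym : ∀ x, V (-x) = V x) (hVconv : ConvexOn ℝ Set.univ V)
    (hVnonneg : ∀ x, 0 ≤ V x) (hVzero : ∀ x, V x = 0 ↔ x = 0)
    (hWsym : ∀ x, W (-x) = W x) (hWconv : ConvexOn ℝ Set.univ W)
    (hWnonneg : ∀ x, 0 ≤ W x) (hWzero : ∀ x, W x = 0 ↔ x = 0)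
    (hli : ∀ a b : ℝ, (∀ x, a * V x + b * W x = 0) → a = 0 ∧ b = 0)
    (hliminf : 0 < Filter.liminf (fun x => V x / W x) Filter.atTop)
    (R : ℝ) (hR : 0 < R)
    (αs : ℝ) (hαs : αs < 0)
    (Z m : ℝ)
    (hZ : Z = ∫ x, Real.exp (αs * V x))
    (hmean : (∫ x, V x * Real.exp (αs * V x)) / Z = R)
    (hm : m = (∫ x, W x * Real.exp (αs * V x)) / Z) :
    ∃ ε > (0 : ℝ), ∀ t ∈ Set.Ioo (m - ε) m, ∃ α β : ℝ,
      α < 0 ∧ β < 0 ∧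
      Integrable (fun x => Real.exp (α * V x + β * W x)) ∧
      (∫ x, V x * Real.exp (α * V x + β * W x)) /
        (∫ x, Real.exp (α * V x + β * W x)) = R ∧
      (∫ x, W x * Real.exp (α * V x + β * W x)) /
        (∫ x, Real.exp (α * V x + β * W x)) = t := by
  have h : Setup V W :=
    ⟨hVsym, hVconv, hVnonneg, hVzero, hWsym, hWconv, hWnonneg, hWzero, hli, hliminf⟩
  have hZ0 : I0 V W αs 0 = Z := by
    rw [hZ, I0]
    congr 1
    funext x
    rw [zero_mul, add_zero]
  have hI1Z : I1 V W αs 0 = ∫ x, V x * Real.exp (αs * V x) := by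
    rw [I1]
    congr 1
    funext x
    rw [zero_mul, add_zero]
  have hI2Z : I2 V W αs 0 = ∫ x, W x * Real.exp (αs * V x) := by
    rw [I2]
    congr 1
    funext x
    rw [zero_mul, add_zero]
  have hEVs : EV V W αs 0 = R := by
    rw [EV, hZ0, hI1Z]
    exact hmean
  have hEWs : EW V W αs 0 = m := by
    rw [EW, hZ0, hI2Z]
    exact hm.symm
  obtain ⟨ε, hε, hmain⟩ := gradient_surjectivity_below_m' V W h R hR αs hαs hEVs m hEWs
  refine ⟨ε, hε, ?_⟩
  intro t ht
  obtain ⟨α, β, hα, hβ, hint, hEV, hEW⟩ := hmain t ht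
  refine ⟨α, β, hα, hβ, hint, ?_, ?_⟩
  · rw [EV, I1, I0] at hEV
    exact hEV
  · rw [EW, I2, I0] at hEW
    exact hEW
end
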